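/- arXiv:2001.00801 — 8 statements merged into one kernel-verified Lean document; each statement's English description precedes it below -/
import Mathlib

section
/- Let δ ≥ 0, C > 0 and γ > 2Cδ + δ². Suppose sup_{i,k} |W_{ik} − W̃_{ik}| ≤ δ, that 0 ≤ W_{ik} ≤ C for all i, k, and that inf_i D_{ii}/(mn) > γ. Then the spectral norm satisfies ‖D^{-1/2} W − D̃^{-1/2} W̃‖₂ ≤ δ/√γ + (2Cδ + δ²)(C + δ) / ( γ·√(γ − 2Cδ − δ²) + √γ·(γ − 2Cδ − δ²) ). -/
open scoped BigOperators

/-- The spectral (ℓ²-operator) norm of a real matrix. -/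
noncomputable def specNorm {n m : ℕ} (A : Matrix (Fin n) (Fin m) ℝ) : ℝ :=
  ‖LinearMap.toContinuousLinearMap (Matrix.toEuclideanLin A)‖

lemma specNorm_le_frob {n m : ℕ} (A : Matrix (Fin n) (Fin m) ℝ) :
    specNorm A ≤ Real.sqrt (∑ i, ∑ k, (A i k)^2) := by
  apply ContinuousLinearMap.opNorm_le_bound _ (Real.sqrt_nonneg _)
  intro x
  show ‖Matrix.toEuclideanLin A x‖ ≤ _
  have hx : ‖x‖ = Real.sqrt (∑ k, (x k)^2) := by
    rw [EuclideanSpace.norm_eq]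
    simp [sq_abs, Real.norm_eq_abs]
  have h1 : ‖Matrix.toEuclideanLin A x‖ = Real.sqrt (∑ i, (∑ k, A i k * x k)^2) := by
    rw [EuclideanSpace.norm_eq]
    congr 1
    apply Finset.sum_congr rfl
    intro i _
    rw [Real.norm_eq_abs, sq_abs]
    congr 1
  rw [h1, hx, ← Real.sqrt_mul (by positivity)]
  apply Real.sqrt_le_sqrt
  rw [Finset.sum_mul]
  apply Finset.sum_le_sum
  intro i _
  exact Finset.sum_mul_sq_le_sq_mul_sq _ _ _

lemma specNorm_le_of_bound {n m : ℕ} (A : Matrix (Fin n) (Fin m) ℝ) (b : ℝ) (hb : 0 ≤ b)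
    (h : ∀ i k, |A i k| ≤ b) :
    specNorm A ≤ Real.sqrt ((n : ℝ) * m) * b := by
  refine (specNorm_le_frob A).trans ?_
  have hsum : ∑ i, ∑ k, (A i k)^2 ≤ (n : ℝ) * m * b^2 := by
    calc ∑ i : Fin n, ∑ k : Fin m, (A i k)^2 ≤ ∑ _i : Fin n, ∑ _k : Fin m, b^2 := by
          refine Finset.sum_le_sum fun i _ => Finset.sum_le_sum fun k _ => ?_
          have h1 := h i k
          calc (A i k)^2 = |A i k|^2 := (sq_abs _).symm
            _ ≤ b^2 := by nlinarith [abs_nonneg (A i k)]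
      _ = (n:ℝ) * m * b^2 := by simp [Finset.sum_const]; ring
  calc Real.sqrt (∑ i, ∑ k, (A i k)^2) ≤ Real.sqrt ((n:ℝ)*m*b^2) := Real.sqrt_le_sqrt hsum
    _ = Real.sqrt ((n:ℝ)*m) * b := by rw [Real.sqrt_mul (by positivity), Real.sqrt_sq hb]

lemma specNorm_add_le {n m : ℕ} (A B : Matrix (Fin n) (Fin m) ℝ) :
    specNorm (A + B) ≤ specNorm A + specNorm B := by
  unfold specNorm
  rw [map_add, map_add]
  exact norm_add_le _ _

/-- Spectral-norm stability of the Roseland normalized landmark-affinity matrix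
(Lemma on `‖D^{-1/2} W − D̃^{-1/2} W̃‖₂`). -/
theorem roseland_opnorm_stability
    {n m : ℕ} (hn : 0 < n) (hm : 0 < m)
    (W Wt : Matrix (Fin n) (Fin m) ℝ)
    (δ C γ : ℝ) (hδ : 0 ≤ δ) (hC : 0 < C)
    (hγ : 2 * C * δ + δ ^ 2 < γ)
    (D Dt : Fin n → ℝ)
    (hD : ∀ i, D i = ∑ j, ∑ k, W i k * W j k)
    (hDt : ∀ i, Dt i = ∑ j, ∑ k, Wt i k * Wt j k)
    (hDpos : ∀ i, 0 < D i) (hDtpos : ∀ i, 0 < Dt i)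
    (hWnonneg : ∀ i k, 0 ≤ W i k) (hWle : ∀ i k, W i k ≤ C)
    (hclose : ∀ i k, |W i k - Wt i k| ≤ δ)
    (hdeg : ∀ i, γ < D i / (m * n)) :
    specNorm (Matrix.diagonal (fun i => (Real.sqrt (D i))⁻¹) * W -
        Matrix.diagonal (fun i => (Real.sqrt (Dt i))⁻¹) * Wt) ≤
      δ / Real.sqrt γ +
        (2 * C * δ + δ ^ 2) * (C + δ) /
          (γ * Real.sqrt (γ - 2 * C * δ - δ ^ 2) +
            Real.sqrt γ * (γ - 2 * C * δ - δ ^ 2)) := by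
  have hgeq : γ - 2 * C * δ - δ ^ 2 = γ - (2 * C * δ + δ ^ 2) := by ring
  rw [hgeq]
  set ε := 2 * C * δ + δ ^ 2 with hε
  have hεnn : 0 ≤ ε := by positivity
  have hγpos : 0 < γ := lt_of_le_of_lt hεnn hγ
  have hγε : 0 < γ - ε := by linarith
  have hmR : (0:ℝ) < m := by exact_mod_cast hm
  have hnR : (0:ℝ) < n := by exact_mod_cast hn
  set N : ℝ := (m : ℝ) * n with hN
  have hNpos : 0 < N := by positivity
  have hsN : (0:ℝ) < Real.sqrt N := Real.sqrt_pos.mpr hNpos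
  set sγ := Real.sqrt γ with hsγdef
  set sγε := Real.sqrt (γ - ε) with hsγεdef
  have hsγ : 0 < sγ := Real.sqrt_pos.mpr hγpos
  have hsγε : 0 < sγε := Real.sqrt_pos.mpr hγε
  have hsγ2 : sγ ^ 2 = γ := Real.sq_sqrt hγpos.le
  have hsγε2 : sγε ^ 2 = γ - ε := Real.sq_sqrt hγε.le
  have hsN2 : (Real.sqrt N) ^ 2 = N := Real.sq_sqrt hNpos.le
  set K := γ * sγε + sγ * (γ - ε) with hK
  have hKpos : 0 < K := by positivity
  -- degree lower bounds
  have hDlow : ∀ i, γ * N < D i := by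
    intro i
    have h1 := hdeg i
    rw [lt_div_iff₀ hNpos] at h1
    exact h1
  have hWtle : ∀ i k, |Wt i k| ≤ C + δ := by
    intro i k
    have h1 := hclose i k
    have h4 : |Wt i k| - |W i k| ≤ |W i k - Wt i k| := by
      rw [abs_sub_comm]; exact abs_sub_abs_le_abs_sub _ _
    have hW : |W i k| ≤ C := abs_le.mpr ⟨by linarith [hWnonneg i k, hC.le], hWle i k⟩
    linarith
  have hdiff : ∀ i, |D i - Dt i| ≤ N * ε := by
    intro i
    have e : D i - Dt i = ∑ j, ∑ k, (W i k * W j k - Wt i k * Wt j k) := by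
      rw [hD i, hDt i, ← Finset.sum_sub_distrib]
      exact Finset.sum_congr rfl fun j _ => (Finset.sum_sub_distrib _ _).symm
    rw [e]
    have hterm : ∀ (j : Fin n) (k : Fin m), |W i k * W j k - Wt i k * Wt j k| ≤ ε := by
      intro j k
      have e2 : W i k * W j k - Wt i k * Wt j k
          = (W i k - Wt i k) * W j k + Wt i k * (W j k - Wt j k) := by ring
      rw [e2]
      refine (abs_add_le _ _).trans ?_
      rw [abs_mul, abs_mul]
      have h1 : |W i k - Wt i k| * |W j k| ≤ δ * C :=
        mul_le_mul (hclose i k)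
          (abs_le.mpr ⟨by linarith [hWnonneg j k, hC.le], hWle j k⟩) (abs_nonneg _) hδ
      have h2 : |Wt i k| * |W j k - Wt j k| ≤ (C + δ) * δ :=
        mul_le_mul (hWtle i k) (hclose j k) (abs_nonneg _) (by linarith)
      have h3 : δ * C + (C + δ) * δ = ε := by rw [hε]; ring
      linarith
    calc |∑ j, ∑ k, (W i k * W j k - Wt i k * Wt j k)|
        ≤ ∑ j, |∑ k, (W i k * W j k - Wt i k * Wt j k)| := Finset.abs_sum_le_sum_abs _ _
      _ ≤ ∑ j : Fin n, ∑ k : Fin m, |W i k * W j k - Wt i k * Wt j k| :=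
          Finset.sum_le_sum fun j _ => Finset.abs_sum_le_sum_abs _ _
      _ ≤ ∑ _j : Fin n, ∑ _k : Fin m, ε :=
          Finset.sum_le_sum fun j _ => Finset.sum_le_sum fun k _ => hterm j k
      _ = N * ε := by simp [Finset.sum_const, hN]; ring
  have hDtlow : ∀ i, (γ - ε) * N < Dt i := by
    intro i
    have h1 := hDlow i
    have h2 := (abs_le.mp (hdiff i)).2
    nlinarith
  -- sqrt lower bounds
  have haLow : ∀ i, sγ * Real.sqrt N < Real.sqrt (D i) := by
    intro i
    have h1 : (sγ * Real.sqrt N)^2 < (Real.sqrt (D i))^2 := by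
      rw [mul_pow, hsγ2, hsN2, Real.sq_sqrt (hDpos i).le]
      exact hDlow i
    exact lt_of_pow_lt_pow_left₀ 2 (Real.sqrt_nonneg _) h1
  have hbLow : ∀ i, sγε * Real.sqrt N < Real.sqrt (Dt i) := by
    intro i
    have h1 : (sγε * Real.sqrt N)^2 < (Real.sqrt (Dt i))^2 := by
      rw [mul_pow, hsγε2, hsN2, Real.sq_sqrt (hDtpos i).le]
      exact hDtlow i
    exact lt_of_pow_lt_pow_left₀ 2 (Real.sqrt_nonneg _) h1
  -- inverse sqrt difference bound
  have hdinv : ∀ i, |(Real.sqrt (D i))⁻¹ - (Real.sqrt (Dt i))⁻¹|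
      ≤ ε / (Real.sqrt N * K) := by
    intro i
    set a := Real.sqrt (D i) with hadef
    set b := Real.sqrt (Dt i) with hbdef
    have ha : 0 < a := Real.sqrt_pos.mpr (hDpos i)
    have hb : 0 < b := Real.sqrt_pos.mpr (hDtpos i)
    have ha2 : a^2 = D i := Real.sq_sqrt (hDpos i).le
    have hb2 : b^2 = Dt i := Real.sq_sqrt (hDtpos i).le
    have e1 : a⁻¹ - b⁻¹ = (b^2 - a^2) / (a * b * (a + b)) := by
      field_simp
      ring
    rw [e1, abs_div, abs_of_pos (show (0:ℝ) < a * b * (a + b) by positivity)]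
    have hnum : |b^2 - a^2| ≤ N * ε := by
      rw [ha2, hb2, abs_sub_comm]
      exact hdiff i
    have hden : N * (Real.sqrt N * K) ≤ a * b * (a + b) := by
      have key : sγ * Real.sqrt N * (sγε * Real.sqrt N) * (sγ * Real.sqrt N + sγε * Real.sqrt N)
          = N * (Real.sqrt N * K) := by
        have e2 : sγ * Real.sqrt N * (sγε * Real.sqrt N) * (sγ * Real.sqrt N + sγε * Real.sqrt N)
            = (sγ^2 * sγε + sγ * sγε^2) * ((Real.sqrt N)^2 * Real.sqrt N) := by ring
        rw [e2, hsγ2, hsγε2, hsN2, hK]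
        ring
      rw [← key]
      have f1 := (haLow i).le
      have f2 := (hbLow i).le
      have g1 : sγ * Real.sqrt N * (sγε * Real.sqrt N) ≤ a * b :=
        mul_le_mul f1 f2 (by positivity) ha.le
      have g2 : sγ * Real.sqrt N + sγε * Real.sqrt N ≤ a + b := add_le_add f1 f2
      exact mul_le_mul g1 g2 (by positivity) (by positivity)
    calc |b^2 - a^2| / (a * b * (a + b)) ≤ (N * ε) / (N * (Real.sqrt N * K)) :=
          div_le_div₀ (by positivity) hnum (by positivity) hden
      _ = ε / (Real.sqrt N * K) := mul_div_mul_left _ _ hNpos.ne'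
  -- split the matrix
  have hsplit : Matrix.diagonal (fun i => (Real.sqrt (D i))⁻¹) * W -
      Matrix.diagonal (fun i => (Real.sqrt (Dt i))⁻¹) * Wt
      = Matrix.diagonal (fun i => (Real.sqrt (D i))⁻¹) * (W - Wt) +
        (Matrix.diagonal (fun i => (Real.sqrt (D i))⁻¹) -
          Matrix.diagonal (fun i => (Real.sqrt (Dt i))⁻¹)) * Wt := by
    rw [Matrix.mul_sub, Matrix.sub_mul]
    abel
  rw [hsplit]
  refine (specNorm_add_le _ _).trans ?_
  have hsNeq : Real.sqrt ((n:ℝ) * m) = Real.sqrt N := by rw [hN, mul_comm]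
  have hA : specNorm (Matrix.diagonal (fun i => (Real.sqrt (D i))⁻¹) * (W - Wt)) ≤ δ / sγ := by
    have hbd : ∀ (i : Fin n) (k : Fin m),
        |(Matrix.diagonal (fun i => (Real.sqrt (D i))⁻¹) * (W - Wt)) i k|
          ≤ δ / (sγ * Real.sqrt N) := by
      intro i k
      rw [Matrix.diagonal_mul, abs_mul]
      have hinv : |(Real.sqrt (D i))⁻¹| ≤ (sγ * Real.sqrt N)⁻¹ := by
        rw [abs_of_pos (inv_pos.mpr (Real.sqrt_pos.mpr (hDpos i)))]
        exact inv_anti₀ (by positivity) (haLow i).le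
      have hc : |(W - Wt) i k| ≤ δ := by rw [Matrix.sub_apply]; exact hclose i k
      calc |(Real.sqrt (D i))⁻¹| * |(W - Wt) i k| ≤ (sγ * Real.sqrt N)⁻¹ * δ :=
            mul_le_mul hinv hc (abs_nonneg _) (by positivity)
        _ = δ / (sγ * Real.sqrt N) := by rw [inv_mul_eq_div]
    refine (specNorm_le_of_bound _ _ (by positivity) hbd).trans ?_
    rw [hsNeq]
    rw [show Real.sqrt N * (δ / (sγ * Real.sqrt N)) = δ / sγ by
      field_simp]
  have hB : specNorm ((Matrix.diagonal (fun i => (Real.sqrt (D i))⁻¹) -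
      Matrix.diagonal (fun i => (Real.sqrt (Dt i))⁻¹)) * Wt) ≤ ε * (C + δ) / K := by
    have hbd : ∀ (i : Fin n) (k : Fin m),
        |((Matrix.diagonal (fun i => (Real.sqrt (D i))⁻¹) -
          Matrix.diagonal (fun i => (Real.sqrt (Dt i))⁻¹)) * Wt) i k|
          ≤ ε / (Real.sqrt N * K) * (C + δ) := by
      intro i k
      rw [Matrix.diagonal_sub, Matrix.diagonal_mul, abs_mul]
      exact mul_le_mul (hdinv i) (hWtle i k) (abs_nonneg _) (by positivity)
    refine (specNorm_le_of_bound _ _ (by positivity) hbd).trans ?_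
    rw [hsNeq]
    rw [show Real.sqrt N * (ε / (Real.sqrt N * K) * (C + δ)) = ε * (C + δ) / K by
      field_simp]
  linarith
end

section
/- Let δ ≥ 0, C > 0 and γ > 2Cδ + δ². Suppose sup_{i,k} |W_{ik} − W̃_{ik}| ≤ δ, that 0 ≤ W_{ik} ≤ C for all i, k, and that inf_i D_{ii}/(mn) > γ. Then the Frobenius norm satisfies ‖D^{-1/2} W − D̃^{-1/2} W̃‖_F ≤ δ/√γ + (2Cδ + δ²)(C + δ) / ( γ·√(γ − 2Cδ − δ²) + √γ·(γ − 2Cδ − δ²) ). -/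
open scoped BigOperators

/-- The Frobenius norm of a real matrix. -/
noncomputable def frobNorm {n m : ℕ} (A : Matrix (Fin n) (Fin m) ℝ) : ℝ :=
  Real.sqrt (∑ i, ∑ j, (A i j) ^ 2)

private lemma l2_triangle_aux {α} [Fintype α] (f g : α → ℝ) :
    Real.sqrt (∑ p, (f p + g p)^2) ≤ Real.sqrt (∑ p, (f p)^2) + Real.sqrt (∑ p, (g p)^2) := by
  have h := norm_add_le ((WithLp.equiv 2 (α → ℝ)).symm f) ((WithLp.equiv 2 (α → ℝ)).symm g)
  simpa [EuclideanSpace.norm_eq, Real.norm_eq_abs, sq_abs, ← WithLp.toLp_add] using h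

private lemma l2_triangle2 {n m : ℕ} (f g : Fin n → Fin m → ℝ) :
    Real.sqrt (∑ i, ∑ k, (f i k + g i k)^2) ≤
      Real.sqrt (∑ i, ∑ k, (f i k)^2) + Real.sqrt (∑ i, ∑ k, (g i k)^2) := by
  have h := l2_triangle_aux (fun p : Fin n × Fin m => f p.1 p.2) (fun p => g p.1 p.2)
  simpa [Fintype.sum_prod_type] using h

private lemma inv_sqrt_sub_eq (x y : ℝ) (hx : 0 < x) (hy : 0 < y) :
    (Real.sqrt x)⁻¹ - (Real.sqrt y)⁻¹ =
      (y - x) / (Real.sqrt x * Real.sqrt y * (Real.sqrt x + Real.sqrt y)) := by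
  have hsx := Real.sqrt_pos.mpr hx
  have hsy := Real.sqrt_pos.mpr hy
  have hx2 : Real.sqrt x * Real.sqrt x = x := Real.mul_self_sqrt hx.le
  have hy2 : Real.sqrt y * Real.sqrt y = y := Real.mul_self_sqrt hy.le
  field_simp
  linear_combination hy2 - hx2

set_option maxHeartbeats 1000000 in
/-- Frobenius-norm stability of the Roseland normalized landmark-affinity matrix
(Lemma on `‖D^{-1/2} W − D̃^{-1/2} W̃‖_F`). -/
theorem roseland_frobnorm_stability
    {n m : ℕ} (hn : 0 < n) (hm : 0 < m)
    (W Wt : Matrix (Fin n) (Fin m) ℝ)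
    (δ C γ : ℝ) (hδ : 0 ≤ δ) (hC : 0 < C)
    (hγ : 2 * C * δ + δ ^ 2 < γ)
    (D Dt : Fin n → ℝ)
    (hD : ∀ i, D i = ∑ j, ∑ k, W i k * W j k)
    (hDt : ∀ i, Dt i = ∑ j, ∑ k, Wt i k * Wt j k)
    (hDpos : ∀ i, 0 < D i) (hDtpos : ∀ i, 0 < Dt i)
    (hWnonneg : ∀ i k, 0 ≤ W i k) (hWle : ∀ i k, W i k ≤ C)
    (hclose : ∀ i k, |W i k - Wt i k| ≤ δ)
    (hdeg : ∀ i, γ < D i / (m * n)) :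
    frobNorm (Matrix.diagonal (fun i => (Real.sqrt (D i))⁻¹) * W -
        Matrix.diagonal (fun i => (Real.sqrt (Dt i))⁻¹) * Wt) ≤
      δ / Real.sqrt γ +
        (2 * C * δ + δ ^ 2) * (C + δ) /
          (γ * Real.sqrt (γ - 2 * C * δ - δ ^ 2) +
            Real.sqrt γ * (γ - 2 * C * δ - δ ^ 2)) := by
  have hε0 : 0 ≤ 2 * C * δ + δ ^ 2 := by positivity
  have hγ0 : 0 < γ := lt_of_le_of_lt hε0 hγ
  have hγε : 0 < γ - 2 * C * δ - δ ^ 2 := by linarith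
  set N : ℝ := (m : ℝ) * (n : ℝ) with hNdef
  have hN : 0 < N := mul_pos (by exact_mod_cast hm) (by exact_mod_cast hn)
  set K : ℝ := γ * Real.sqrt (γ - 2 * C * δ - δ ^ 2) +
      Real.sqrt γ * (γ - 2 * C * δ - δ ^ 2) with hKdef
  have hK : 0 < K :=
    add_pos (mul_pos hγ0 (Real.sqrt_pos.mpr hγε)) (mul_pos (Real.sqrt_pos.mpr hγ0) hγε)
  set S : ℝ := Real.sqrt N with hSdef
  have hS : 0 < S := Real.sqrt_pos.mpr hN
  have hS2 : S * S = N := Real.mul_self_sqrt hN.le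
  -- basic entry bounds
  have hWt_abs : ∀ i k, |Wt i k| ≤ C + δ := by
    intro i k
    have h1 := abs_le.mp (hclose i k)
    have h2 := hWnonneg i k
    have h3 := hWle i k
    exact abs_le.mpr ⟨by linarith, by linarith⟩
  have hterm : ∀ i j k, |W i k * W j k - Wt i k * Wt j k| ≤ 2 * C * δ + δ ^ 2 := by
    intro i j k
    have hWa : |W i k| ≤ C := abs_le.mpr ⟨by linarith [hWnonneg i k], hWle i k⟩
    calc |W i k * W j k - Wt i k * Wt j k|
        = |W i k * (W j k - Wt j k) + Wt j k * (W i k - Wt i k)| := by ring_nf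
      _ ≤ |W i k * (W j k - Wt j k)| + |Wt j k * (W i k - Wt i k)| := abs_add_le _ _
      _ = |W i k| * |W j k - Wt j k| + |Wt j k| * |W i k - Wt i k| := by
          rw [abs_mul, abs_mul]
      _ ≤ C * δ + (C + δ) * δ :=
          add_le_add (mul_le_mul hWa (hclose j k) (abs_nonneg _) hC.le)
            (mul_le_mul (hWt_abs j k) (hclose i k) (abs_nonneg _) (by linarith))
      _ = 2 * C * δ + δ ^ 2 := by ring
  have hDlow : ∀ i, γ * N < D i := fun i => (lt_div_iff₀ hN).mp (hdeg i)
  have hdiff : ∀ i, |D i - Dt i| ≤ N * (2 * C * δ + δ ^ 2) := by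
    intro i
    rw [hD i, hDt i, ← Finset.sum_sub_distrib]
    calc |∑ j, (∑ k, W i k * W j k - ∑ k, Wt i k * Wt j k)|
        ≤ ∑ j, |∑ k, W i k * W j k - ∑ k, Wt i k * Wt j k| := Finset.abs_sum_le_sum_abs _ _
      _ ≤ ∑ j : Fin n, (N / (n : ℝ)) * (2 * C * δ + δ ^ 2) := by
          apply Finset.sum_le_sum
          intro j _
          rw [← Finset.sum_sub_distrib]
          calc |∑ k, (W i k * W j k - Wt i k * Wt j k)|
              ≤ ∑ k, |W i k * W j k - Wt i k * Wt j k| := Finset.abs_sum_le_sum_abs _ _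
            _ ≤ ∑ k : Fin m, (2 * C * δ + δ ^ 2) :=
                Finset.sum_le_sum fun k _ => hterm i j k
            _ = (m : ℝ) * (2 * C * δ + δ ^ 2) := by
                rw [Finset.sum_const, Finset.card_univ, Fintype.card_fin, nsmul_eq_mul]
            _ = (N / (n : ℝ)) * (2 * C * δ + δ ^ 2) := by
                have hn' : (n : ℝ) ≠ 0 := by positivity
                field_simp [hNdef]
                rw [hNdef]; ring
          -- done
      _ = (n : ℝ) * ((N / (n : ℝ)) * (2 * C * δ + δ ^ 2)) := by
          rw [Finset.sum_const, Finset.card_univ, Fintype.card_fin, nsmul_eq_mul]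
      _ = N * (2 * C * δ + δ ^ 2) := by
          have hn' : (n : ℝ) ≠ 0 := by positivity
          field_simp
  have hDtlow : ∀ i, (γ - 2 * C * δ - δ ^ 2) * N < Dt i := by
    intro i
    have h1 := (abs_le.mp (hdiff i)).2
    have h2 := hDlow i
    nlinarith
  -- inverse-sqrt difference bound
  have hib : ∀ i, |(Real.sqrt (D i))⁻¹ - (Real.sqrt (Dt i))⁻¹| ≤
      (2 * C * δ + δ ^ 2) / (S * K) := by
    intro i
    have hden1 : 0 < Real.sqrt (γ * N) * Real.sqrt ((γ - 2 * C * δ - δ ^ 2) * N) *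
        (Real.sqrt (γ * N) + Real.sqrt ((γ - 2 * C * δ - δ ^ 2) * N)) := by
      have h1 : 0 < Real.sqrt (γ * N) := Real.sqrt_pos.mpr (by positivity)
      have h2 : 0 < Real.sqrt ((γ - 2 * C * δ - δ ^ 2) * N) :=
        Real.sqrt_pos.mpr (by positivity)
      positivity
    have hdenD : 0 < Real.sqrt (D i) * Real.sqrt (Dt i) *
        (Real.sqrt (D i) + Real.sqrt (Dt i)) := by
      have h1 : 0 < Real.sqrt (D i) := Real.sqrt_pos.mpr (hDpos i)
      have h2 : 0 < Real.sqrt (Dt i) := Real.sqrt_pos.mpr (hDtpos i)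
      positivity
    rw [inv_sqrt_sub_eq _ _ (hDpos i) (hDtpos i), abs_div, abs_of_pos hdenD]
    have hnum : |Dt i - D i| ≤ N * (2 * C * δ + δ ^ 2) := by
      rw [abs_sub_comm]; exact hdiff i
    calc |Dt i - D i| / (Real.sqrt (D i) * Real.sqrt (Dt i) *
          (Real.sqrt (D i) + Real.sqrt (Dt i)))
        ≤ (N * (2 * C * δ + δ ^ 2)) / (Real.sqrt (γ * N) *
            Real.sqrt ((γ - 2 * C * δ - δ ^ 2) * N) *
            (Real.sqrt (γ * N) + Real.sqrt ((γ - 2 * C * δ - δ ^ 2) * N))) := by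
          apply div_le_div₀ (by positivity) hnum hden1
          gcongr
          · exact (hDlow i).le
          · exact (hDtlow i).le
          · exact (hDlow i).le
          · exact (hDtlow i).le
      _ = (2 * C * δ + δ ^ 2) / (S * K) := by
          rw [Real.sqrt_mul hγ0.le, Real.sqrt_mul hγε.le]
          have hg2 : Real.sqrt γ * Real.sqrt γ = γ := Real.mul_self_sqrt hγ0.le
          have hgg2 : Real.sqrt (γ - 2 * C * δ - δ ^ 2) *
              Real.sqrt (γ - 2 * C * δ - δ ^ 2) = γ - 2 * C * δ - δ ^ 2 :=
            Real.mul_self_sqrt hγε.le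
          have hsγ : 0 < Real.sqrt γ := Real.sqrt_pos.mpr hγ0
          have hsg : 0 < Real.sqrt (γ - 2 * C * δ - δ ^ 2) := Real.sqrt_pos.mpr hγε
          rw [div_eq_div_iff (by positivity) (by positivity)]
          rw [hKdef, ← hSdef]
          linear_combination
            (-((2 * C * δ + δ ^ 2) * S * N * Real.sqrt (γ - 2 * C * δ - δ ^ 2))) * hg2 +
            (-((2 * C * δ + δ ^ 2) * S * N * Real.sqrt γ)) * hgg2 +
            (-((2 * C * δ + δ ^ 2) * S *
              (Real.sqrt γ * Real.sqrt γ * Real.sqrt (γ - 2 * C * δ - δ ^ 2) +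
               Real.sqrt γ * Real.sqrt (γ - 2 * C * δ - δ ^ 2) *
                 Real.sqrt (γ - 2 * C * δ - δ ^ 2)))) * hS2
  -- split the matrix entrywise
  set a : Fin n → Fin m → ℝ := fun i k => (Real.sqrt (D i))⁻¹ * (W i k - Wt i k) with hadef
  set b : Fin n → Fin m → ℝ :=
    fun i k => ((Real.sqrt (D i))⁻¹ - (Real.sqrt (Dt i))⁻¹) * Wt i k with hbdef
  have key : frobNorm (Matrix.diagonal (fun i => (Real.sqrt (D i))⁻¹) * W -
      Matrix.diagonal (fun i => (Real.sqrt (Dt i))⁻¹) * Wt) =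
      Real.sqrt (∑ i, ∑ k, (a i k + b i k) ^ 2) := by
    unfold frobNorm
    congr 1
    refine Finset.sum_congr rfl fun i _ => Finset.sum_congr rfl fun k _ => ?_
    rw [Matrix.sub_apply, Matrix.diagonal_mul, Matrix.diagonal_mul, hadef, hbdef]
    ring
  rw [key]
  have htri := l2_triangle2 a b
  -- bound for the `a` part
  have hsa : ∑ i, ∑ k, (a i k) ^ 2 ≤ δ ^ 2 / γ := by
    calc ∑ i, ∑ k, (a i k) ^ 2
        ≤ ∑ _i : Fin n, ∑ _k : Fin m, δ ^ 2 / (γ * N) := by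
          apply Finset.sum_le_sum
          intro i _
          apply Finset.sum_le_sum
          intro k _
          have h1 : (W i k - Wt i k) ^ 2 ≤ δ ^ 2 := by
            have h := abs_le.mp (hclose i k)
            exact sq_le_sq' h.1 h.2
          have h2 : ((Real.sqrt (D i))⁻¹) ^ 2 = (D i)⁻¹ := by
            rw [← Real.sqrt_inv, Real.sq_sqrt (inv_nonneg.mpr (hDpos i).le)]
          have h3 : (D i)⁻¹ ≤ (γ * N)⁻¹ := by
            apply inv_anti₀ (by positivity) (hDlow i).le
          calc (a i k) ^ 2 = ((Real.sqrt (D i))⁻¹) ^ 2 * (W i k - Wt i k) ^ 2 := by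
                rw [hadef]; ring
            _ = (D i)⁻¹ * (W i k - Wt i k) ^ 2 := by rw [h2]
            _ ≤ (γ * N)⁻¹ * δ ^ 2 := by
                apply mul_le_mul h3 h1 (sq_nonneg _) (by positivity)
            _ = δ ^ 2 / (γ * N) := by ring
      _ = (n : ℝ) * ((m : ℝ) * (δ ^ 2 / (γ * N))) := by
          rw [Finset.sum_const, Finset.sum_const, Finset.card_univ, Finset.card_univ,
            Fintype.card_fin, Fintype.card_fin, nsmul_eq_mul, nsmul_eq_mul]
      _ = δ ^ 2 / γ := by
          have hm' : (m : ℝ) ≠ 0 := by positivity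
          have hn' : (n : ℝ) ≠ 0 := by positivity
          rw [hNdef]
          field_simp
  have hsa' : Real.sqrt (∑ i, ∑ k, (a i k) ^ 2) ≤ δ / Real.sqrt γ := by
    refine (Real.sqrt_le_sqrt hsa).trans ?_
    rw [Real.sqrt_div (by positivity), Real.sqrt_sq hδ]
  -- bound for the `b` part
  have hsb : ∑ i, ∑ k, (b i k) ^ 2 ≤ ((2 * C * δ + δ ^ 2) * (C + δ) / K) ^ 2 := by
    calc ∑ i, ∑ k, (b i k) ^ 2
        ≤ ∑ _i : Fin n, ∑ _k : Fin m,
            ((2 * C * δ + δ ^ 2) / (S * K)) ^ 2 * (C + δ) ^ 2 := by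
          apply Finset.sum_le_sum
          intro i _
          apply Finset.sum_le_sum
          intro k _
          have h1 : ((Real.sqrt (D i))⁻¹ - (Real.sqrt (Dt i))⁻¹) ^ 2 ≤
              ((2 * C * δ + δ ^ 2) / (S * K)) ^ 2 := by
            have h := abs_le.mp (hib i)
            exact sq_le_sq' h.1 h.2
          have h2 : (Wt i k) ^ 2 ≤ (C + δ) ^ 2 := by
            have h := abs_le.mp (hWt_abs i k)
            exact sq_le_sq' h.1 h.2
          calc (b i k) ^ 2
              = ((Real.sqrt (D i))⁻¹ - (Real.sqrt (Dt i))⁻¹) ^ 2 * (Wt i k) ^ 2 := by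
                rw [hbdef]; ring
            _ ≤ ((2 * C * δ + δ ^ 2) / (S * K)) ^ 2 * (C + δ) ^ 2 :=
                mul_le_mul h1 h2 (sq_nonneg _) (by positivity)
      _ = N * (((2 * C * δ + δ ^ 2) / (S * K)) ^ 2 * (C + δ) ^ 2) := by
          rw [Finset.sum_const, Finset.sum_const, Finset.card_univ, Finset.card_univ,
            Fintype.card_fin, Fintype.card_fin, nsmul_eq_mul, nsmul_eq_mul, hNdef]
          ring
      _ = ((2 * C * δ + δ ^ 2) * (C + δ) / K) ^ 2 := by
          have hNS : N = S * S := hS2.symm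
          rw [hNS]
          field_simp
  have hsb' : Real.sqrt (∑ i, ∑ k, (b i k) ^ 2) ≤ (2 * C * δ + δ ^ 2) * (C + δ) / K := by
    refine (Real.sqrt_le_sqrt hsb).trans ?_
    rw [Real.sqrt_sq (by positivity)]
  calc Real.sqrt (∑ i, ∑ k, (a i k + b i k) ^ 2)
      ≤ Real.sqrt (∑ i, ∑ k, (a i k) ^ 2) + Real.sqrt (∑ i, ∑ k, (b i k) ^ 2) := htri
    _ ≤ δ / Real.sqrt γ + (2 * C * δ + δ ^ 2) * (C + δ) / K := add_le_add hsa' hsb'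
end

section
/- Let δ ≥ 0, C > 0 and γ > 2Cδ + δ². Suppose there exists f > 0 such that sup_{i,k} |W_{ik} − W̃_{ik}/f| ≤ δ, that 0 ≤ W_{ik} ≤ C for all i, k, and that inf_i D_{ii}/(mn) > γ. Then both ‖D^{-1/2} W − D̃^{-1/2} W̃‖₂ and ‖D^{-1/2} W − D̃^{-1/2} W̃‖_F are bounded by δ/√γ + (2Cδ + δ²)(C + δ) / ( γ·√(γ − 2Cδ − δ²) + √γ·(γ − 2Cδ − δ²) ). -/
open scoped BigOperators

lemma frobNorm_nonneg {n m : ℕ} (A : Matrix (Fin n) (Fin m) ℝ) : 0 ≤ frobNorm A :=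
  Real.sqrt_nonneg _

lemma specNorm_le_frobNorm {n m : ℕ} (A : Matrix (Fin n) (Fin m) ℝ) :
    specNorm A ≤ frobNorm A := by
  apply ContinuousLinearMap.opNorm_le_bound _ (frobNorm_nonneg A)
  intro x
  have hx : ∀ i, (Matrix.toEuclideanLin A x : EuclideanSpace ℝ (Fin n)) i
      = ∑ k, A i k * x k := by
    intro i
    simp [Matrix.toEuclideanLin_apply, Matrix.mulVec, dotProduct]
  rw [EuclideanSpace.norm_eq, EuclideanSpace.norm_eq]
  have h1 : ∑ i, ‖(Matrix.toEuclideanLin A x : EuclideanSpace ℝ (Fin n)) i‖ ^ 2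
      ≤ (∑ i, ∑ k, (A i k) ^ 2) * ∑ k, ‖x k‖ ^ 2 := by
    rw [Finset.sum_mul]
    apply Finset.sum_le_sum
    intro i _
    rw [hx i, Real.norm_eq_abs, sq_abs]
    calc (∑ k, A i k * x k) ^ 2 ≤ (∑ k, (A i k) ^ 2) * ∑ k, (x k) ^ 2 :=
          Finset.sum_mul_sq_le_sq_mul_sq _ _ _
      _ = (∑ k, (A i k) ^ 2) * ∑ k, ‖x k‖ ^ 2 := by
          simp [Real.norm_eq_abs, sq_abs]
  calc Real.sqrt (∑ i, ‖(Matrix.toEuclideanLin A x : EuclideanSpace ℝ (Fin n)) i‖ ^ 2)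
      ≤ Real.sqrt ((∑ i, ∑ k, (A i k) ^ 2) * ∑ k, ‖x k‖ ^ 2) := Real.sqrt_le_sqrt h1
    _ = frobNorm A * Real.sqrt (∑ k, ‖x k‖ ^ 2) := by
        rw [Real.sqrt_mul (by positivity)]; rfl

lemma sqrt_inv_sub_bound {a b c d e : ℝ} (hc : 0 < c) (hd : 0 < d)
    (hca : c ≤ a) (hdb : d ≤ b) (hab : |a - b| ≤ e) :
    |(Real.sqrt a)⁻¹ - (Real.sqrt b)⁻¹| ≤
      e / (Real.sqrt c * Real.sqrt d * (Real.sqrt c + Real.sqrt d)) := by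
  have ha : 0 < a := lt_of_lt_of_le hc hca
  have hb : 0 < b := lt_of_lt_of_le hd hdb
  have hsa : 0 < Real.sqrt a := Real.sqrt_pos.2 ha
  have hsb : 0 < Real.sqrt b := Real.sqrt_pos.2 hb
  have hsc : 0 < Real.sqrt c := Real.sqrt_pos.2 hc
  have hsd : 0 < Real.sqrt d := Real.sqrt_pos.2 hd
  have key : |(Real.sqrt a)⁻¹ - (Real.sqrt b)⁻¹| =
      |a - b| / (Real.sqrt a * Real.sqrt b * (Real.sqrt a + Real.sqrt b)) := by
    have h1 : (Real.sqrt a)⁻¹ - (Real.sqrt b)⁻¹ =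
        (Real.sqrt b - Real.sqrt a) / (Real.sqrt a * Real.sqrt b) := by
      field_simp
    have h2 : |Real.sqrt b - Real.sqrt a| * (Real.sqrt a + Real.sqrt b) = |a - b| := by
      have hmul : (Real.sqrt b - Real.sqrt a) * (Real.sqrt a + Real.sqrt b) = b - a := by
        have hsa2 : Real.sqrt a * Real.sqrt a = a := Real.mul_self_sqrt ha.le
        have hsb2 : Real.sqrt b * Real.sqrt b = b := Real.mul_self_sqrt hb.le
        nlinarith [hsa2, hsb2]
      rw [← abs_of_pos (show (0:ℝ) < Real.sqrt a + Real.sqrt b by positivity), ← abs_mul,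
        hmul, abs_sub_comm]
    rw [h1, abs_div, abs_of_pos (by positivity : (0:ℝ) < Real.sqrt a * Real.sqrt b)]
    rw [div_eq_div_iff (by positivity) (by positivity)]
    calc |Real.sqrt b - Real.sqrt a| * (Real.sqrt a * Real.sqrt b * (Real.sqrt a + Real.sqrt b))
        = (|Real.sqrt b - Real.sqrt a| * (Real.sqrt a + Real.sqrt b)) * (Real.sqrt a * Real.sqrt b) := by ring
      _ = |a - b| * (Real.sqrt a * Real.sqrt b) := by rw [h2]
  rw [key]
  apply div_le_div₀ (le_trans (abs_nonneg _) hab) hab (by positivity)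
  have h3 : Real.sqrt c ≤ Real.sqrt a := Real.sqrt_le_sqrt hca
  have h4 : Real.sqrt d ≤ Real.sqrt b := Real.sqrt_le_sqrt hdb
  gcongr

lemma entry_to_E {s g b δ N X : ℝ} (hs : 0 < s) (hg : 0 < g) (hb : 0 < b) :
    δ * (s * g)⁻¹ + X * (s ^ 2 * N / ((s * g) * (s * b) * (s * g + s * b)))
      = (δ / g + N * X / (g ^ 2 * b + g * b ^ 2)) / s := by
  have h1 : g ^ 2 * b + g * b ^ 2 ≠ 0 := by positivity
  field_simp

set_option maxHeartbeats 1000000 in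
/-- Stability of the Roseland normalized landmark-affinity matrix after a global
rescaling of the noisy matrix: if `sup_{i,k} |W_{ik} − W̃_{ik}/f| ≤ δ` for some `f > 0`,
then both the spectral and the Frobenius norms of `D^{-1/2} W − D̃^{-1/2} W̃` enjoy the
same bound. -/
theorem roseland_norm_stability_rescaled
    {n m : ℕ} (hn : 0 < n) (hm : 0 < m)
    (W Wt : Matrix (Fin n) (Fin m) ℝ)
    (δ C γ : ℝ) (hδ : 0 ≤ δ) (hC : 0 < C)
    (hγ : 2 * C * δ + δ ^ 2 < γ)
    (D Dt : Fin n → ℝ)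
    (hD : ∀ i, D i = ∑ j, ∑ k, W i k * W j k)
    (hDt : ∀ i, Dt i = ∑ j, ∑ k, Wt i k * Wt j k)
    (hDpos : ∀ i, 0 < D i) (hDtpos : ∀ i, 0 < Dt i)
    (hWnonneg : ∀ i k, 0 ≤ W i k) (hWle : ∀ i k, W i k ≤ C)
    (f : ℝ) (hf : 0 < f)
    (hclose : ∀ i k, |W i k - Wt i k / f| ≤ δ)
    (hdeg : ∀ i, γ < D i / (m * n)) :
    specNorm (Matrix.diagonal (fun i => (Real.sqrt (D i))⁻¹) * W -
        Matrix.diagonal (fun i => (Real.sqrt (Dt i))⁻¹) * Wt) ≤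
      δ / Real.sqrt γ +
        (2 * C * δ + δ ^ 2) * (C + δ) /
          (γ * Real.sqrt (γ - 2 * C * δ - δ ^ 2) +
            Real.sqrt γ * (γ - 2 * C * δ - δ ^ 2)) ∧
    frobNorm (Matrix.diagonal (fun i => (Real.sqrt (D i))⁻¹) * W -
        Matrix.diagonal (fun i => (Real.sqrt (Dt i))⁻¹) * Wt) ≤
      δ / Real.sqrt γ +
        (2 * C * δ + δ ^ 2) * (C + δ) /
          (γ * Real.sqrt (γ - 2 * C * δ - δ ^ 2) +
            Real.sqrt γ * (γ - 2 * C * δ - δ ^ 2)) := by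
  have hf' : f ≠ 0 := ne_of_gt hf
  set N := 2 * C * δ + δ ^ 2 with hNdef
  set β := γ - 2 * C * δ - δ ^ 2 with hβdef
  have hNnonneg : 0 ≤ N := by rw [hNdef]; positivity
  have hβpos : 0 < β := by rw [hβdef]; linarith
  have hγpos : 0 < γ := lt_of_le_of_lt hNnonneg hγ
  have hmn : (0:ℝ) < (m : ℝ) * n := by
    have : (0:ℝ) < (m:ℝ) := by exact_mod_cast hm
    have : (0:ℝ) < (n:ℝ) := by exact_mod_cast hn
    positivity
  set A := Matrix.diagonal (fun i => (Real.sqrt (D i))⁻¹) * W -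
      Matrix.diagonal (fun i => (Real.sqrt (Dt i))⁻¹) * Wt with hAdef
  set W' : Matrix (Fin n) (Fin m) ℝ := fun i k => Wt i k / f with hW'def
  set D' : Fin n → ℝ := fun i => Dt i / f ^ 2 with hD'def
  have hD'pos : ∀ i, 0 < D' i := fun i => by
    rw [hD'def]; exact div_pos (hDtpos i) (by positivity)
  have hrw : ∀ i k, (Real.sqrt (Dt i))⁻¹ * Wt i k = (Real.sqrt (D' i))⁻¹ * W' i k := by
    intro i k
    have hsq : Real.sqrt (D' i) = Real.sqrt (Dt i) / f := by
      rw [hD'def]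
      rw [Real.sqrt_div (hDtpos i).le, Real.sqrt_sq hf.le]
    rw [hsq, hW'def]
    have hst : Real.sqrt (Dt i) ≠ 0 := ne_of_gt (Real.sqrt_pos.2 (hDtpos i))
    field_simp
  have hA : ∀ i k, A i k = (Real.sqrt (D i))⁻¹ * W i k - (Real.sqrt (D' i))⁻¹ * W' i k := by
    intro i k
    rw [← hrw]
    simp [hAdef, Matrix.sub_apply, Matrix.diagonal_mul]
  have hclose' : ∀ i k, |W i k - W' i k| ≤ δ := hclose
  have hWabs : ∀ i k, |W i k| ≤ C := fun i k => by
    rw [abs_of_nonneg (hWnonneg i k)]; exact hWle i k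
  have hW'abs : ∀ i k, |W' i k| ≤ C + δ := by
    intro i k
    have h1 := hclose' i k
    have h2 := hWabs i k
    have := abs_sub_abs_le_abs_sub (W' i k) (W i k)
    rw [abs_sub_comm] at this
    linarith
  have hD'eq : ∀ i, D' i = ∑ j, ∑ k, W' i k * W' j k := by
    intro i
    rw [hD'def]
    simp only [hDt, Finset.sum_div]
    refine Finset.sum_congr rfl fun j _ => ?_
    refine Finset.sum_congr rfl fun k _ => ?_
    rw [hW'def]
    ring
  have hDlow : ∀ i, γ * ((m : ℝ) * n) < D i := by
    intro i
    exact (lt_div_iff₀ hmn).1 (hdeg i)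
  -- per-entry product bound
  have hper : ∀ i j k, |W i k * W j k - W' i k * W' j k| ≤ N := by
    intro i j k
    have e1 : W i k * W j k - W' i k * W' j k
        = W i k * (W j k - W' j k) + W' j k * (W i k - W' i k) := by ring
    rw [e1]
    refine le_trans (abs_add_le _ _) ?_
    rw [abs_mul, abs_mul]
    have b1 : |W i k| * |W j k - W' j k| ≤ C * δ :=
      mul_le_mul (hWabs i k) (hclose' j k) (abs_nonneg _) hC.le
    have b2 : |W' j k| * |W i k - W' i k| ≤ (C + δ) * δ :=
      mul_le_mul (hW'abs j k) (hclose' i k) (abs_nonneg _) (by linarith)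
    rw [hNdef]; nlinarith
  have hDD' : ∀ i, |D i - D' i| ≤ ((m : ℝ) * n) * N := by
    intro i
    rw [hD, hD'eq]
    rw [← Finset.sum_sub_distrib]
    calc |∑ j, (∑ k, W i k * W j k - ∑ k, W' i k * W' j k)|
        ≤ ∑ j, |∑ k, W i k * W j k - ∑ k, W' i k * W' j k| := Finset.abs_sum_le_sum_abs _ _
      _ ≤ ∑ _j : Fin n, (m : ℝ) * N := by
          refine Finset.sum_le_sum fun j _ => ?_
          rw [← Finset.sum_sub_distrib]
          calc |∑ k, (W i k * W j k - W' i k * W' j k)|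
              ≤ ∑ k, |W i k * W j k - W' i k * W' j k| := Finset.abs_sum_le_sum_abs _ _
            _ ≤ ∑ _k : Fin m, N := Finset.sum_le_sum fun k _ => hper i j k
            _ = (m : ℝ) * N := by simp [Finset.sum_const, mul_comm]
      _ = ((m : ℝ) * n) * N := by
          simp [Finset.sum_const]
          ring
  have hD'low : ∀ i, ((m : ℝ) * n) * β < D' i := by
    intro i
    have h1 := hDD' i
    have h2 := abs_le.1 h1
    have h3 := hDlow i
    rw [hβdef]
    have hNe : ((m:ℝ)*n) * (γ - 2*C*δ - δ^2) = γ * ((m:ℝ)*n) - ((m:ℝ)*n) * N := by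
      rw [hNdef]; ring
    rw [hNe]
    linarith [h2.2]
  -- square roots
  set s := Real.sqrt ((m : ℝ) * n) with hsdef
  set g := Real.sqrt γ with hgdef
  set b := Real.sqrt β with hbdef
  have hs : 0 < s := Real.sqrt_pos.2 hmn
  have hg : 0 < g := Real.sqrt_pos.2 hγpos
  have hb : 0 < b := Real.sqrt_pos.2 hβpos
  have hs2 : s ^ 2 = (m : ℝ) * n := Real.sq_sqrt hmn.le
  have hg2 : g ^ 2 = γ := Real.sq_sqrt hγpos.le
  have hb2 : b ^ 2 = β := Real.sq_sqrt hβpos.le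
  have hsplitγ : Real.sqrt (((m:ℝ)*n) * γ) = s * g := by
    rw [Real.sqrt_mul hmn.le, hsdef, hgdef]
  have hsplitβ : Real.sqrt (((m:ℝ)*n) * β) = s * b := by
    rw [Real.sqrt_mul hmn.le, hsdef, hbdef]
  set E := δ / g + N * (C + δ) / (g ^ 2 * b + g * b ^ 2) with hEdef
  have hE0 : 0 ≤ E := by
    rw [hEdef]
    have : (0:ℝ) ≤ N * (C + δ) := mul_nonneg hNnonneg (by linarith)
    have hden : (0:ℝ) < g ^ 2 * b + g * b ^ 2 := by positivity
    positivity
  -- entry bound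
  have hentry : ∀ i k, |A i k| ≤ E / s := by
    intro i k
    have e1 : A i k = (W i k - W' i k) * (Real.sqrt (D i))⁻¹ +
        W' i k * ((Real.sqrt (D i))⁻¹ - (Real.sqrt (D' i))⁻¹) := by
      rw [hA]; ring
    have hsD : 0 < Real.sqrt (D i) := Real.sqrt_pos.2 (hDpos i)
    have hmono : (Real.sqrt (D i))⁻¹ ≤ (Real.sqrt (((m:ℝ)*n) * γ))⁻¹ := by
      apply inv_anti₀ (Real.sqrt_pos.2 (by positivity))
      apply Real.sqrt_le_sqrt
      have := hDlow i
      linarith [hDlow i]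
    have hinvdiff : |(Real.sqrt (D i))⁻¹ - (Real.sqrt (D' i))⁻¹| ≤
        ((m:ℝ)*n) * N / (Real.sqrt (((m:ℝ)*n)*γ) * Real.sqrt (((m:ℝ)*n)*β) *
          (Real.sqrt (((m:ℝ)*n)*γ) + Real.sqrt (((m:ℝ)*n)*β))) :=
      sqrt_inv_sub_bound (by positivity) (by positivity)
        (by nlinarith [hDlow i]) (by nlinarith [hD'low i]) (hDD' i)
    have t1 : |(W i k - W' i k) * (Real.sqrt (D i))⁻¹| ≤ δ * (s * g)⁻¹ := by
      rw [abs_mul, abs_of_pos (by positivity : (0:ℝ) < (Real.sqrt (D i))⁻¹), ← hsplitγ]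
      exact mul_le_mul (hclose' i k) hmono (by positivity) hδ
    have t2 : |W' i k * ((Real.sqrt (D i))⁻¹ - (Real.sqrt (D' i))⁻¹)| ≤
        (C + δ) * (s ^ 2 * N / ((s * g) * (s * b) * (s * g + s * b))) := by
      rw [abs_mul]
      have hb2' : ((m:ℝ)*n) * N / (Real.sqrt (((m:ℝ)*n)*γ) * Real.sqrt (((m:ℝ)*n)*β) *
          (Real.sqrt (((m:ℝ)*n)*γ) + Real.sqrt (((m:ℝ)*n)*β)))
          = s ^ 2 * N / ((s * g) * (s * b) * (s * g + s * b)) := by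
        rw [hsplitγ, hsplitβ, hs2]
      rw [← hb2']
      exact mul_le_mul (hW'abs i k) (hinvdiff) (abs_nonneg _) (by linarith)
    calc |A i k| ≤ |(W i k - W' i k) * (Real.sqrt (D i))⁻¹| +
          |W' i k * ((Real.sqrt (D i))⁻¹ - (Real.sqrt (D' i))⁻¹)| := by
          rw [e1]; exact abs_add_le _ _
      _ ≤ δ * (s * g)⁻¹ + (C + δ) * (s ^ 2 * N / ((s * g) * (s * b) * (s * g + s * b))) :=
          add_le_add t1 t2
      _ = E / s := by rw [hEdef]; exact entry_to_E hs hg hb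
  -- final goal rewriting
  have hgoalE : δ / Real.sqrt γ + N * (C + δ) /
      (γ * Real.sqrt β + Real.sqrt γ * β) = E := by
    rw [hEdef, ← hgdef, ← hbdef, ← hg2, ← hb2]
  rw [hgoalE]
  -- Frobenius bound
  have hsum : ∑ i, ∑ k, (A i k) ^ 2 ≤ E ^ 2 := by
    have hEs : ∀ i k, (A i k) ^ 2 ≤ (E / s) ^ 2 := by
      intro i k
      rw [← sq_abs (A i k)]
      exact pow_le_pow_left₀ (abs_nonneg _) (hentry i k) 2
    calc ∑ i, ∑ k, (A i k) ^ 2 ≤ ∑ _i : Fin n, ∑ _k : Fin m, (E / s) ^ 2 :=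
          Finset.sum_le_sum fun i _ => Finset.sum_le_sum fun k _ => hEs i k
      _ = (n : ℝ) * ((m : ℝ) * (E / s) ^ 2) := by simp [Finset.sum_const]
      _ = E ^ 2 := by
          rw [div_pow, hs2]
          field_simp
  have hfrob : frobNorm A ≤ E := by
    calc frobNorm A ≤ Real.sqrt (E ^ 2) := Real.sqrt_le_sqrt hsum
      _ = E := Real.sqrt_sq hE0
  exact ⟨le_trans (specNorm_le_frobNorm A) hfrob, hfrob⟩
end

section
/- Suppose v ∈ ℝⁿ is an eigenvector of the matrix U_n with eigenvalue λ ≠ 0, i.e., U_n v = λ v. Define f : M → ℝ by f(x) := ( Σ_{j=1}^{n} K̂(x, x_j) v_j ) / ( λ · Σ_{j=1}^{n} K̂(x, x_j) ). Then f is continuous, ρ_n f = v, and f is an eigenfunction of T̂ with eigenvalue λ, i.e., T̂ f = λ f. -/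
open scoped BigOperators

/-- The landmark kernel `K̂(x,y) = (1/m) Σ_j k(x,z_j) k(z_j,y)`. -/
noncomputable def Khat {M : Type*} (k : M → M → ℝ) {m : ℕ} (z : Fin m → M)
    (x y : M) : ℝ :=
  (1 / (m : ℝ)) * ∑ j, k x (z j) * k (z j) y

/-- The empirical degree function `d̂(x) = (1/n) Σ_i K̂(x, x_i)`. -/
noncomputable def dhat {M : Type*} (k : M → M → ℝ) {n m : ℕ}
    (x : Fin n → M) (z : Fin m → M) (p : M) : ℝ :=
  (1 / (n : ℝ)) * ∑ i, Khat k z p (x i)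

/-- The empirical landmark-diffusion operator
`(T̂ f)(x) = (1/n) Σ_i (K̂(x,x_i)/d̂(x)) f(x_i)`. -/
noncomputable def That {M : Type*} (k : M → M → ℝ) {n m : ℕ}
    (x : Fin n → M) (z : Fin m → M) (f : M → ℝ) (p : M) : ℝ :=
  (1 / (n : ℝ)) * ∑ i, (Khat k z p (x i) / dhat k x z p) * f (x i)

/-- The row-stochastic matrix `(U_n)_{ij} = K̂(x_i,x_j) / Σ_l K̂(x_i,x_l)`. -/
noncomputable def Umat {M : Type*} (k : M → M → ℝ) {n m : ℕ}
    (x : Fin n → M) (z : Fin m → M) : Matrix (Fin n) (Fin n) ℝ :=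
  fun i j => Khat k z (x i) (x j) / ∑ l, Khat k z (x i) (x l)

/-- If `v` is an eigenvector of `U_n` with eigenvalue `λ ≠ 0`, then the function
`f(x) := (Σ_j K̂(x,x_j) v_j)/(λ Σ_j K̂(x,x_j))` is continuous, restricts to `v` on
the sample points, and is an eigenfunction of `T̂` with the same eigenvalue. -/
theorem eigenvector_extension_is_eigenfunction
    {M : Type*} [TopologicalSpace M] {n m : ℕ} (hn : 0 < n) (hm : 0 < m)
    (x : Fin n → M) (z : Fin m → M) (k : M → M → ℝ)
    (hk : Continuous fun p : M × M => k p.1 p.2)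
    (hkpos : ∀ a b, 0 < k a b)
    (lam : ℝ) (hlam : lam ≠ 0) (v : Fin n → ℝ)
    (heig : (Umat k x z).mulVec v = lam • v) :
    Continuous (fun p : M =>
        (∑ j, Khat k z p (x j) * v j) / (lam * ∑ j, Khat k z p (x j))) ∧
    (∀ i, (∑ j, Khat k z (x i) (x j) * v j) /
        (lam * ∑ j, Khat k z (x i) (x j)) = v i) ∧
    (∀ p : M, That k x z
        (fun q => (∑ j, Khat k z q (x j) * v j) / (lam * ∑ j, Khat k z q (x j))) p =
      lam * ((∑ j, Khat k z p (x j) * v j) / (lam * ∑ j, Khat k z p (x j)))) := by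
  have hKpos : ∀ p q : M, 0 < Khat k z p q := by
    intro p q
    unfold Khat
    apply mul_pos
    · positivity
    · apply Finset.sum_pos
      · intro j _
        exact mul_pos (hkpos _ _) (hkpos _ _)
      · haveI := Fin.pos_iff_nonempty.mp hm
        exact Finset.univ_nonempty
  have hSpos : ∀ p : M, 0 < ∑ j, Khat k z p (x j) := by
    intro p
    apply Finset.sum_pos
    · intro j _; exact hKpos _ _
    · haveI := Fin.pos_iff_nonempty.mp hn
      exact Finset.univ_nonempty
  have hSne : ∀ p : M, (∑ j, Khat k z p (x j)) ≠ 0 := fun p => (hSpos p).ne'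
  have hKcont : ∀ q : M, Continuous fun p => Khat k z p q := by
    intro q
    unfold Khat
    apply Continuous.mul continuous_const
    apply continuous_finset_sum
    intro j _
    exact ((hk.comp (continuous_id.prodMk continuous_const)).mul continuous_const)
  have heig' : ∀ i, (∑ j, Khat k z (x i) (x j) * v j) / (∑ l, Khat k z (x i) (x l))
      = lam * v i := by
    intro i
    have := congrFun heig i
    simpa [Matrix.mulVec, dotProduct, Umat, Finset.sum_div, div_mul_eq_mul_div]
      using this
  have hfx : ∀ i, (∑ j, Khat k z (x i) (x j) * v j) /
      (lam * ∑ j, Khat k z (x i) (x j)) = v i := by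
    intro i
    have h := heig' i
    rw [div_eq_iff (hSne (x i))] at h
    rw [h, mul_assoc, mul_div_mul_left _ _ hlam, mul_div_assoc,
      div_self (hSne (x i)), mul_one]
  refine ⟨?_, hfx, ?_⟩
  · apply Continuous.div
    · apply continuous_finset_sum
      intro j _
      exact (hKcont (x j)).mul continuous_const
    · exact continuous_const.mul (continuous_finset_sum _ fun j _ => hKcont (x j))
    · intro p
      exact mul_ne_zero hlam (hSne p)
  · intro p
    have hnn : (n : ℝ) ≠ 0 := Nat.cast_ne_zero.mpr hn.ne'
    have hdhat : dhat k x z p = (1 / (n : ℝ)) * ∑ j, Khat k z p (x j) := rfl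
    unfold That
    simp only [hfx]
    have lhs_eq : ∀ i : Fin n, Khat k z p (x i) / dhat k x z p * v i
        = (n : ℝ) * (Khat k z p (x i) * v i / (∑ j, Khat k z p (x j))) := by
      intro i
      rw [hdhat]
      field_simp
    rw [Finset.sum_congr rfl fun i _ => lhs_eq i, ← Finset.mul_sum, ← Finset.sum_div]
    field_simp
end

section
/- Suppose a_α ≤ Y_α ≤ b_α almost surely for every α ∈ 𝒜, where a_α, b_α ∈ ℝ, and suppose (𝒜_j)_{j=1}^{k} is a proper cover of 𝒜 of size k. Then for all t > 0, ℙ( X − 𝔼[X] ≥ t ) ≤ exp( −2t² / ( k · Σ_{α∈𝒜} (b_α − a_α)² ) ), and the same bound holds for ℙ( X − 𝔼[X] ≤ −t ). -/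
open MeasureTheory ProbabilityTheory
open scoped BigOperators

lemma key_scalar {p : ℝ} (hp0 : 0 ≤ p) (hp1 : p ≤ 1) (u : ℝ) :
    (1 - p) + p * Real.exp u ≤ Real.exp (p * u + u ^ 2 / 8) := by
  set D : ℝ → ℝ := fun u => (1 - p) + p * Real.exp u with hD
  have hDpos : ∀ u, 0 < D u := by
    intro u
    rcases eq_or_lt_of_le hp0 with h | h
    · simp [hD, ← h]
    · have := mul_pos h (Real.exp_pos u)
      have h1 : (0:ℝ) ≤ 1 - p := by linarith
      simp only [hD]; linarith
  have hDd : ∀ u, HasDerivAt D (p * Real.exp u) u := by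
    intro u
    exact ((Real.hasDerivAt_exp u).const_mul p).const_add (1 - p)
  set g : ℝ → ℝ := fun u => p * u + u ^ 2 / 8 - Real.log (D u) with hg
  set g' : ℝ → ℝ := fun u => p + u / 4 - p * Real.exp u / D u with hg'
  have hgd : ∀ u, HasDerivAt g (g' u) u := by
    intro u
    have h1 : HasDerivAt (fun u => Real.log (D u)) (p * Real.exp u / D u) u :=
      (hDd u).log (hDpos u).ne'
    have h2 : HasDerivAt (fun u : ℝ => p * u + u ^ 2 / 8)
        (p + (2 : ℕ) * u ^ 1 / 8) u :=
      ((hasDerivAt_id u).const_mul p).congr_deriv (by ring) |>.add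
        ((hasDerivAt_pow 2 u).div_const 8)
    have := h2.sub h1
    refine this.congr_deriv ?_
    show _ = p + u / 4 - p * Real.exp u / D u; push_cast; ring
  have hg'd : ∀ u, HasDerivAt g'
      (1 / 4 - (p * Real.exp u * D u - p * Real.exp u * (p * Real.exp u)) / (D u) ^ 2) u := by
    intro u
    have h1 : HasDerivAt (fun u => p * Real.exp u / D u)
        ((p * Real.exp u * D u - p * Real.exp u * (p * Real.exp u)) / (D u) ^ 2) u :=
      (((Real.hasDerivAt_exp u).const_mul p).div (hDd u) (hDpos u).ne')
    have h2 : HasDerivAt (fun u : ℝ => p + u / 4) (1 / 4) u := by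
      simpa using ((hasDerivAt_id u).div_const 4).const_add p
    exact h2.sub h1
  have hg'' : ∀ u, 0 ≤ 1 / 4 - (p * Real.exp u * D u - p * Real.exp u * (p * Real.exp u)) / (D u) ^ 2 := by
    intro u
    rw [sub_nonneg, div_le_iff₀ (by have := hDpos u; positivity : (0:ℝ) < (D u)^2)]
    have h1 : D u = (1 - p) + p * Real.exp u := rfl
    nlinarith [sq_nonneg (D u - 2 * (p * Real.exp u)), (Real.exp_pos u).le,
      mul_nonneg hp0 (Real.exp_pos u).le]
  have hg'mono : Monotone g' := by
    apply monotone_of_deriv_nonneg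
    · exact fun u => (hg'd u).differentiableAt
    · intro u; rw [(hg'd u).deriv]; exact hg'' u
  have hdiff : Differentiable ℝ g := fun u => (hgd u).differentiableAt
  have hg'0 : g' 0 = 0 := by simp [hg', hD]
  have hg0 : g 0 = 0 := by simp [hg, hD]
  have hkey : 0 ≤ g u := by
    rcases le_total 0 u with h | h
    · have hmono : MonotoneOn g (Set.Ici 0) := by
        apply monotoneOn_of_deriv_nonneg (convex_Ici 0) hdiff.continuous.continuousOn
          (fun x _ => (hgd x).differentiableAt.differentiableWithinAt)
        intro x hx
        rw [interior_Ici] at hx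
        rw [(hgd x).deriv, ← hg'0]
        exact hg'mono hx.le
      have := hmono Set.self_mem_Ici h h
      rwa [hg0] at this
    · have hanti : AntitoneOn g (Set.Iic 0) := by
        apply antitoneOn_of_deriv_nonpos (convex_Iic 0) hdiff.continuous.continuousOn
          (fun x _ => (hgd x).differentiableAt.differentiableWithinAt)
        intro x hx
        rw [interior_Iic] at hx
        rw [(hgd x).deriv, ← hg'0]
        exact hg'mono hx.le
      have := hanti h Set.self_mem_Iic h
      rwa [hg0] at this
  have : Real.log (D u) ≤ p * u + u ^ 2 / 8 := by
    simp only [hg] at hkey; linarith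
  calc D u = Real.exp (Real.log (D u)) := (Real.exp_log (hDpos u)).symm
    _ ≤ Real.exp (p * u + u ^ 2 / 8) := Real.exp_le_exp.2 this

lemma integrable_exp_mul_of_ae_mem_Icc {Ω : Type*} [MeasurableSpace Ω] {μ : Measure Ω} [IsFiniteMeasure μ] {f : Ω → ℝ}
    (hm : AEStronglyMeasurable f μ) {A B : ℝ} (h : ∀ᵐ ω ∂μ, A ≤ f ω ∧ f ω ≤ B) (c : ℝ) :
    Integrable (fun ω => Real.exp (c * f ω)) μ := by
  apply Integrable.mono' (integrable_const (Real.exp (|c| * max |A| |B|)))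
    (Real.continuous_exp.comp_aestronglyMeasurable (hm.const_mul c))
  filter_upwards [h] with ω hω
  rw [Real.norm_eq_abs, abs_of_pos (Real.exp_pos _)]
  apply Real.exp_le_exp.2
  calc c * f ω ≤ |c * f ω| := le_abs_self _
    _ = |c| * |f ω| := abs_mul _ _
    _ ≤ |c| * max |A| |B| :=
        mul_le_mul_of_nonneg_left (abs_le_max_abs_abs hω.1 hω.2) (abs_nonneg c)


lemma hoeffding_mgf {Ω : Type*} [MeasurableSpace Ω] {μ : Measure Ω} [IsProbabilityMeasure μ] {Z : Ω → ℝ}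
    (hZm : AEStronglyMeasurable Z μ) {a b : ℝ}
    (hab : ∀ᵐ ω ∂μ, a ≤ Z ω ∧ Z ω ≤ b) (s : ℝ) :
    ∫ ω, Real.exp (s * Z ω) ∂μ ≤
      Real.exp (s * (∫ ω, Z ω ∂μ) + s ^ 2 * (b - a) ^ 2 / 8) := by
  have hZint : Integrable Z μ := by
    apply Integrable.mono' (integrable_const (max |a| |b|)) hZm
    filter_upwards [hab] with ω hω
    rw [Real.norm_eq_abs]; exact abs_le_max_abs_abs hω.1 hω.2
  set m := ∫ ω, Z ω ∂μ with hm
  have ham : a ≤ m := by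
    have : ∫ _ω, a ∂μ ≤ ∫ ω, Z ω ∂μ :=
      integral_mono_ae (integrable_const a) hZint (by filter_upwards [hab] with ω hω using hω.1)
    simpa using this
  have hmb : m ≤ b := by
    have : ∫ ω, Z ω ∂μ ≤ ∫ _ω, b ∂μ :=
      integral_mono_ae hZint (integrable_const b) (by filter_upwards [hab] with ω hω using hω.2)
    simpa using this
  rcases eq_or_lt_of_le (ham.trans hmb) with heq | hlt
  · have hZa : ∀ᵐ ω ∂μ, Z ω = a := by
      filter_upwards [hab] with ω hω
      have := hω.2; rw [← heq] at this; linarith [hω.1]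
    have h1 : ∫ ω, Real.exp (s * Z ω) ∂μ = Real.exp (s * a) := by
      rw [integral_congr_ae (g := fun _ => Real.exp (s * a))
        (by filter_upwards [hZa] with ω hω; rw [hω])]
      simp
    have h2 : m = a := by
      rw [hm, integral_congr_ae (g := fun _ => a) hZa]; simp
    rw [h1, h2]
    apply Real.exp_le_exp.2
    nlinarith [sq_nonneg (s * (b - a))]
  · set p := (m - a) / (b - a) with hp
    have hba : 0 < b - a := by linarith
    have hp0 : 0 ≤ p := div_nonneg (by linarith) hba.le
    have hp1 : p ≤ 1 := by rw [hp, div_le_one hba]; linarith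
    set c1 := (Real.exp (s * b) - Real.exp (s * a)) / (b - a) with hc1
    set c2 := (b * Real.exp (s * a) - a * Real.exp (s * b)) / (b - a) with hc2
    have hrw : ∀ x : ℝ, (b - x) / (b - a) * Real.exp (s * a) + (x - a) / (b - a) * Real.exp (s * b)
        = c1 * x + c2 := by
      intro x; rw [hc1, hc2]; field_simp; ring
    have hconv : ∀ᵐ ω ∂μ, Real.exp (s * Z ω) ≤ c1 * Z ω + c2 := by
      filter_upwards [hab] with ω hω
      rw [← hrw]
      have hθ0 : 0 ≤ (b - Z ω) / (b - a) := div_nonneg (by linarith [hω.2]) hba.le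
      have hθ0' : 0 ≤ (Z ω - a) / (b - a) := div_nonneg (by linarith [hω.1]) hba.le
      have hθ1 : (b - Z ω) / (b - a) + (Z ω - a) / (b - a) = 1 := by field_simp; ring
      have := convexOn_exp.2 (Set.mem_univ (s * a)) (Set.mem_univ (s * b)) hθ0 hθ0' hθ1
      simp only [smul_eq_mul] at this
      refine le_trans (le_of_eq (congrArg Real.exp ?_)) this
      rw [div_mul_eq_mul_div, div_mul_eq_mul_div, ← add_div, eq_div_iff hba.ne']; ring
    have hrhs_int : Integrable (fun ω => c1 * Z ω + c2) μ :=
      (hZint.const_mul c1).add (integrable_const c2)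
    have hsba : Real.exp (s * b) = Real.exp (s * a) * Real.exp (s * (b - a)) := by
      rw [← Real.exp_add]; ring_nf
    calc ∫ ω, Real.exp (s * Z ω) ∂μ
        ≤ ∫ ω, (c1 * Z ω + c2) ∂μ :=
          integral_mono_ae (integrable_exp_mul_of_ae_mem_Icc hZm hab s) hrhs_int hconv
      _ = c1 * m + c2 := by
          rw [integral_add (hZint.const_mul c1) (integrable_const c2),
            integral_const_mul, integral_const]
          simp [hm]
      _ = Real.exp (s * a) * ((1 - p) + p * Real.exp (s * (b - a))) := by
          rw [hc1, hc2, hp, hsba]; field_simp; ring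
      _ ≤ Real.exp (s * a) * Real.exp (p * (s * (b - a)) + (s * (b - a)) ^ 2 / 8) :=
          mul_le_mul_of_nonneg_left (key_scalar hp0 hp1 _) (Real.exp_pos _).le
      _ = Real.exp (s * m + s ^ 2 * (b - a) ^ 2 / 8) := by
          rw [← Real.exp_add]; congr 1
          rw [hp]; field_simp; ring

lemma filter_attach_sum {ι M : Type*} [AddCommMonoid M] (s : Finset ι) (p : ι → Prop)
    [DecidablePred p] (f : ι → M) :
    ∑ β ∈ s.attach.filter (fun β => p β.1), f β.1 = ∑ α ∈ s.filter p, f α := by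
  rw [Finset.sum_filter, Finset.sum_attach s (fun α => if p α then f α else 0),
    ← Finset.sum_filter]

lemma filter_attach_prod {ι M : Type*} [CommMonoid M] (s : Finset ι) (p : ι → Prop)
    [DecidablePred p] (f : ι → M) :
    ∏ β ∈ s.attach.filter (fun β => p β.1), f β.1 = ∏ α ∈ s.filter p, f α := by
  rw [Finset.prod_filter, Finset.prod_attach s (fun α => if p α then f α else 1),
    ← Finset.prod_filter]

set_option maxHeartbeats 1000000 in
lemma upper_tail_bound {Ω : Type*} [MeasurableSpace Ω] (μ : Measure Ω) [IsProbabilityMeasure μ]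
    {ι : Type*} [Fintype ι]
    (Y : ι → Ω → ℝ) (hmeas : ∀ α, Measurable (Y α)) (hint : ∀ α, Integrable (Y α) μ)
    (a b : ι → ℝ) (hbound : ∀ α, ∀ᵐ ω ∂μ, a α ≤ Y α ω ∧ Y α ω ≤ b α)
    (k : ℕ) (cov : Fin k → Finset ι) (hcover : ∀ α, ∃ j, α ∈ cov j)
    (hind : ∀ j, iIndepFun
        (fun α : (cov j : Finset ι) => Y α) μ)
    (t : ℝ) (ht : 0 < t) :
    (μ {ω | t ≤ (∑ α, Y α ω) - ∫ ω', (∑ α, Y α ω') ∂μ}).toReal ≤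
        Real.exp (-2 * t ^ 2 / (k * ∑ α, (b α - a α) ^ 2)) := by
  classical
  set S := ∑ α, (b α - a α) ^ 2 with hS
  by_cases hc : (k : ℝ) * S = 0
  · rw [hc, div_zero, Real.exp_zero]
    calc (μ _).toReal ≤ (μ Set.univ).toReal :=
          ENNReal.toReal_mono (measure_ne_top _ _) (measure_mono (Set.subset_univ _))
      _ = 1 := by simp
  -- nontrivial case
  have hk : (k : ℝ) ≠ 0 := fun h => hc (by rw [h, zero_mul])
  have hSne : S ≠ 0 := fun h => hc (by rw [h, mul_zero])
  have hS0 : 0 ≤ S := Finset.sum_nonneg fun α _ => sq_nonneg _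
  have hSpos : 0 < S := lt_of_le_of_ne hS0 (Ne.symm hSne)
  have hkpos : 0 < (k : ℝ) := lt_of_le_of_ne (Nat.cast_nonneg k) (Ne.symm hk)
  set m := ∫ ω', (∑ α, Y α ω') ∂μ with hm
  -- fibers of the cover
  have hcov' : ∀ α, α ∈ cov (hcover α).choose := fun α => (hcover α).choose_spec
  set jm : ι → Fin k := fun α => (hcover α).choose with hjmdef
  have hjm : ∀ α, α ∈ cov (jm α) := hcov'
  set B : Fin k → Finset ι := fun j => Finset.univ.filter (fun α => jm α = j) with hB
  have hfib : ∀ (f : ι → ℝ), ∑ j, ∑ α ∈ B j, f α = ∑ α, f α := by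
    intro f
    simp only [hB]
    exact Finset.sum_fiberwise_of_maps_to (fun α _ => Finset.mem_univ (jm α)) f
  have hBj : ∀ j, (cov j).filter (fun α => jm α = j) = B j := by
    intro j
    ext α
    simp only [hB, Finset.mem_filter, Finset.mem_univ, true_and, and_iff_right_iff_imp]
    exact fun h => h ▸ hjm α
  set Z : Fin k → Ω → ℝ := fun j ω => ∑ α ∈ B j, Y α ω with hZ
  have hZmeas : ∀ j, Measurable (Z j) := by
    intro j; simp only [hZ]
    exact Finset.measurable_sum _ fun α _ => hmeas α
  set mj : Fin k → ℝ := fun j => ∫ ω, Z j ω ∂μ with hmj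
  set Sj : Fin k → ℝ := fun j => ∑ α ∈ B j, (b α - a α) ^ 2 with hSj
  have hSsum : ∑ j, Sj j = S := by simp only [hSj, hS]; exact hfib _
  have hmjsum : ∀ j, mj j = ∑ α ∈ B j, ∫ ω, Y α ω ∂μ := by
    intro j
    simp only [hmj, hZ]
    exact integral_finset_sum _ fun α _ => hint α
  have hmsum : ∑ j, mj j = m := by
    have h2 : m = ∑ α, ∫ ω, Y α ω ∂μ := integral_finset_sum _ fun α _ => hint α
    rw [h2, ← hfib fun α => ∫ ω, Y α ω ∂μ]
    exact Finset.sum_congr rfl fun j _ => hmjsum j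
  -- a.e. bounds for sums
  have hball : ∀ᵐ ω ∂μ, ∀ α, a α ≤ Y α ω ∧ Y α ω ≤ b α := ae_all_iff.2 hbound
  have hZb : ∀ j, ∀ᵐ ω ∂μ, (∑ α ∈ B j, a α) ≤ Z j ω ∧ Z j ω ≤ ∑ α ∈ B j, b α := by
    intro j
    filter_upwards [hball] with ω hω
    simp only [hZ]
    exact ⟨Finset.sum_le_sum fun α _ => (hω α).1, Finset.sum_le_sum fun α _ => (hω α).2⟩
  -- per-class mgf bound via independence
  have hmgfj : ∀ (j) (c : ℝ), ∫ ω, Real.exp (c * Z j ω) ∂μ ≤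
      Real.exp (c * mj j + c ^ 2 * Sj j / 8) := by
    intro j c
    have hsumT : (∑ β ∈ (cov j).attach.filter (fun β => jm β.1 = j), Y (β : ((cov j : Finset ι))).1) = Z j := by
      funext ω
      rw [Finset.sum_apply]
      calc ∑ β ∈ (cov j).attach.filter (fun β => jm β.1 = j), Y β.1 ω = ∑ α ∈ (cov j).filter (fun α => jm α = j), Y α ω :=
            filter_attach_sum (cov j) (fun α => jm α = j) (fun α => Y α ω)
        _ = Z j ω := by rw [hBj j]
    have hprod := (hind j).mgf_sum (t := c) (fun β => hmeas β.1)
      ((cov j).attach.filter (fun β => jm β.1 = j))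
    rw [hsumT] at hprod
    have hprodT : ∏ β ∈ (cov j).attach.filter (fun β => jm β.1 = j), mgf (Y β.1) μ c
        = ∏ α ∈ B j, mgf (Y α) μ c := by
      calc ∏ β ∈ (cov j).attach.filter (fun β => jm β.1 = j), mgf (Y β.1) μ c
          = ∏ α ∈ (cov j).filter (fun α => jm α = j), mgf (Y α) μ c :=
            filter_attach_prod (cov j) (fun α => jm α = j) (fun α => mgf (Y α) μ c)
        _ = _ := by rw [hBj j]
    have hmgfZ : ∫ ω, Real.exp (c * Z j ω) ∂μ = ∏ α ∈ B j, mgf (Y α) μ c := by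
      rw [← hprodT, ← hprod]; rfl
    rw [hmgfZ]
    calc ∏ α ∈ B j, mgf (Y α) μ c
        ≤ ∏ α ∈ B j, Real.exp (c * (∫ ω, Y α ω ∂μ) + c ^ 2 * (b α - a α) ^ 2 / 8) := by
          apply Finset.prod_le_prod (fun α _ => mgf_nonneg)
          intro α _
          exact hoeffding_mgf (hmeas α).aestronglyMeasurable (hbound α) c
      _ = Real.exp (∑ α ∈ B j, (c * (∫ ω, Y α ω ∂μ) + c ^ 2 * (b α - a α) ^ 2 / 8)) :=
          (Real.exp_sum _ _).symm
      _ = Real.exp (c * mj j + c ^ 2 * Sj j / 8) := by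
          congr 1
          rw [Finset.sum_add_distrib, ← Finset.mul_sum, ← hmjsum j]
          congr 1
          simp only [hSj]
          rw [Finset.mul_sum, Finset.sum_div]
  -- centered version
  have hcent : ∀ (j) (c : ℝ), ∫ ω, Real.exp (c * (Z j ω - mj j)) ∂μ ≤
      Real.exp (c ^ 2 * Sj j / 8) := by
    intro j c
    have h1 : ∀ ω, Real.exp (c * (Z j ω - mj j)) =
        Real.exp (-(c * mj j)) * Real.exp (c * Z j ω) := by
      intro ω; rw [← Real.exp_add]; ring_nf
    simp_rw [h1]
    rw [integral_const_mul]
    calc Real.exp (-(c * mj j)) * ∫ ω, Real.exp (c * Z j ω) ∂μ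
        ≤ Real.exp (-(c * mj j)) * Real.exp (c * mj j + c ^ 2 * Sj j / 8) :=
          mul_le_mul_of_nonneg_left (hmgfj j c) (Real.exp_pos _).le
      _ = Real.exp (c ^ 2 * Sj j / 8) := by rw [← Real.exp_add]; ring_nf
  -- Chernoff setup
  set s : ℝ := 4 * t / (k * S) with hs
  have hspos : 0 < s := div_pos (by linarith) (mul_pos hkpos hSpos)
  set X : Ω → ℝ := fun ω => (∑ α, Y α ω) - m with hX
  have hXmeas : Measurable X := by
    simp only [hX]
    exact (Finset.measurable_sum _ fun α _ => hmeas α).sub measurable_const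
  have hXb : ∀ᵐ ω ∂μ, ((∑ α, a α) - m) ≤ X ω ∧ X ω ≤ (∑ α, b α) - m := by
    filter_upwards [hball] with ω hω
    simp only [hX]
    constructor
    · have := Finset.sum_le_sum (s := Finset.univ) fun α _ => (hω α).1
      linarith
    · have := Finset.sum_le_sum (s := Finset.univ) fun α _ => (hω α).2
      linarith
  have hXint_exp : Integrable (fun ω => Real.exp (s * X ω)) μ :=
    integrable_exp_mul_of_ae_mem_Icc hXmeas.aestronglyMeasurable hXb s
  -- the mgf bound via Hölder
  have hWint : ∀ j, Integrable (fun ω => Real.exp (((k : ℝ) * s) * (Z j ω - mj j))) μ := by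
    intro j
    apply integrable_exp_mul_of_ae_mem_Icc ((hZmeas j).sub measurable_const).aestronglyMeasurable
      (A := (∑ α ∈ B j, a α) - mj j) (B := (∑ α ∈ B j, b α) - mj j)
    filter_upwards [hZb j] with ω hω
    exact ⟨by simp only [Pi.sub_apply]; exact sub_le_sub_right hω.1 _, by simp only [Pi.sub_apply]; exact sub_le_sub_right hω.2 _⟩
  have hpt : ∀ ω, Real.exp (s * X ω) =
      ∏ j, (Real.exp (((k : ℝ) * s) * (Z j ω - mj j))) ^ ((k : ℝ)⁻¹) := by
    intro ω
    have h1 : ∀ j, (Real.exp (((k : ℝ) * s) * (Z j ω - mj j))) ^ ((k : ℝ)⁻¹)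
        = Real.exp (s * (Z j ω - mj j)) := by
      intro j
      rw [Real.rpow_def_of_pos (Real.exp_pos _), Real.log_exp]
      congr 1
      field_simp
    simp_rw [h1]
    rw [← Real.exp_sum]
    congr 1
    have h2 : ∑ j, s * (Z j ω - mj j) = s * ((∑ j, Z j ω) - ∑ j, mj j) := by
      rw [← Finset.mul_sum, Finset.sum_sub_distrib]
    rw [h2, hmsum]
    have h3 : ∑ j, Z j ω = ∑ α, Y α ω := by
      have := hfib fun α => Y α ω
      simpa only [hZ] using this
    rw [h3]
  have hmgfX : ∫ ω, Real.exp (s * X ω) ∂μ ≤ Real.exp ((k : ℝ) * s ^ 2 * S / 8) := by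
    rw [← ENNReal.ofReal_le_ofReal_iff (Real.exp_pos _).le]
    rw [ofReal_integral_eq_lintegral_ofReal hXint_exp
      (Filter.Eventually.of_forall fun ω => (Real.exp_pos _).le)]
    calc ∫⁻ ω, ENNReal.ofReal (Real.exp (s * X ω)) ∂μ
        = ∫⁻ ω, ∏ j, (ENNReal.ofReal (Real.exp (((k : ℝ) * s) * (Z j ω - mj j)))) ^ ((k : ℝ)⁻¹) ∂μ := by
          apply lintegral_congr
          intro ω
          rw [hpt ω, ENNReal.ofReal_prod_of_nonneg
            (fun j _ => Real.rpow_nonneg (Real.exp_pos _).le _)]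
          exact Finset.prod_congr rfl fun j _ =>
            (ENNReal.ofReal_rpow_of_pos (Real.exp_pos _)).symm
      _ ≤ ∏ j, (∫⁻ ω, ENNReal.ofReal (Real.exp (((k : ℝ) * s) * (Z j ω - mj j))) ∂μ) ^ ((k : ℝ)⁻¹) := by
          apply ENNReal.lintegral_prod_norm_pow_le
          · intro j _
            exact (ENNReal.measurable_ofReal.comp
              (((hZmeas j).sub measurable_const).const_mul _).exp).aemeasurable
          · simp only [Finset.sum_const, Finset.card_univ, Fintype.card_fin, nsmul_eq_mul]
            field_simp
          · intro j _
            positivity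
      _ ≤ ∏ j, (ENNReal.ofReal (Real.exp (((k : ℝ) * s) ^ 2 * Sj j / 8))) ^ ((k : ℝ)⁻¹) := by
          apply Finset.prod_le_prod'
          intro j _
          apply ENNReal.rpow_le_rpow _ (by positivity)
          rw [← ofReal_integral_eq_lintegral_ofReal (hWint j)
            (Filter.Eventually.of_forall fun ω => (Real.exp_pos _).le)]
          exact ENNReal.ofReal_le_ofReal (hcent j _)
      _ = ENNReal.ofReal (Real.exp ((k : ℝ) * s ^ 2 * S / 8)) := by
          have h5 : ∀ j : Fin k,
              (ENNReal.ofReal (Real.exp (((k : ℝ) * s) ^ 2 * Sj j / 8))) ^ ((k : ℝ)⁻¹)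
              = ENNReal.ofReal ((Real.exp (((k : ℝ) * s) ^ 2 * Sj j / 8)) ^ ((k : ℝ)⁻¹)) :=
            fun j => ENNReal.ofReal_rpow_of_pos (Real.exp_pos _)
          simp_rw [h5]
          rw [← ENNReal.ofReal_prod_of_nonneg
            (fun j _ => Real.rpow_nonneg (Real.exp_pos _).le _)]
          congr 1
          have h4 : ∀ j, (Real.exp (((k : ℝ) * s) ^ 2 * Sj j / 8)) ^ ((k : ℝ)⁻¹)
              = Real.exp ((k : ℝ) * s ^ 2 * Sj j / 8) := by
            intro j
            rw [Real.rpow_def_of_pos (Real.exp_pos _), Real.log_exp]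
            field_simp
          simp_rw [h4]
          rw [← Real.exp_sum]
          congr 1
          have : ∑ j, (k : ℝ) * s ^ 2 * Sj j / 8 = (k : ℝ) * s ^ 2 * (∑ j, Sj j) / 8 := by
            rw [Finset.mul_sum, Finset.sum_div]
          rw [this, hSsum]
  -- Chernoff conclusion
  have hcher := measure_ge_le_exp_mul_mgf (X := X) (μ := μ) t hspos.le hXint_exp
  have hgoal : {ω | t ≤ (∑ α, Y α ω) - m} = {ω | t ≤ X ω} := by
    simp only [hX]
  rw [hgoal]
  have hmgf_eq : mgf X μ s = ∫ ω, Real.exp (s * X ω) ∂μ := rfl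
  calc (μ {ω | t ≤ X ω}).toReal ≤ Real.exp (-s * t) * mgf X μ s := hcher
    _ ≤ Real.exp (-s * t) * Real.exp ((k : ℝ) * s ^ 2 * S / 8) := by
        rw [hmgf_eq]
        exact mul_le_mul_of_nonneg_left hmgfX (Real.exp_pos _).le
    _ = Real.exp (-s * t + (k : ℝ) * s ^ 2 * S / 8) := (Real.exp_add _ _).symm
    _ = Real.exp (-2 * t ^ 2 / ((k : ℝ) * S)) := by
        congr 1
        rw [hs]
        field_simp
        ring

/-- Hoeffding-type concentration inequality for a sum `X = Σ_α Y_α` of bounded,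
possibly dependent random variables admitting a proper cover of size `k` (Janson):
`ℙ(X − 𝔼X ≥ t) ≤ exp(−2t² / (k Σ_α (b_α − a_α)²))`, and likewise for the lower tail. -/
theorem hoeffding_dependent_proper_cover
    {Ω : Type*} [MeasurableSpace Ω] (μ : Measure Ω) [IsProbabilityMeasure μ]
    {ι : Type*} [Fintype ι]
    (Y : ι → Ω → ℝ) (hmeas : ∀ α, Measurable (Y α))
    (hint : ∀ α, Integrable (Y α) μ)
    (a b : ι → ℝ)
    (hbound : ∀ α, ∀ᵐ ω ∂μ, a α ≤ Y α ω ∧ Y α ω ≤ b α)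
    (k : ℕ) (cov : Fin k → Finset ι)
    (hcover : ∀ α, ∃ j, α ∈ cov j)
    (hind : ∀ j, iIndepFun
        (fun α : (cov j : Finset ι) => Y α) μ)
    (t : ℝ) (ht : 0 < t) :
    (μ {ω | t ≤ (∑ α, Y α ω) - ∫ ω', (∑ α, Y α ω') ∂μ}).toReal ≤
        Real.exp (-2 * t ^ 2 / (k * ∑ α, (b α - a α) ^ 2)) ∧
    (μ {ω | (∑ α, Y α ω) - ∫ ω', (∑ α, Y α ω') ∂μ ≤ -t}).toReal ≤
        Real.exp (-2 * t ^ 2 / (k * ∑ α, (b α - a α) ^ 2)) := by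
  constructor
  · exact upper_tail_bound μ Y hmeas hint a b hbound k cov hcover hind t ht
  · have hbound' : ∀ α, ∀ᵐ ω ∂μ, (-b α) ≤ -Y α ω ∧ -Y α ω ≤ -a α := by
      intro α
      filter_upwards [hbound α] with ω hω
      exact ⟨neg_le_neg hω.2, neg_le_neg hω.1⟩
    have hind' : ∀ j, iIndepFun
        (fun α : (cov j : Finset ι) => fun ω => -Y α ω) μ := fun j =>
      (hind j).comp (fun _ => fun x : ℝ => -x) (fun _ => measurable_neg)
    have h := upper_tail_bound μ (fun α ω => -Y α ω) (fun α => (hmeas α).neg)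
      (fun α => (hint α).neg) (fun α => -b α) (fun α => -a α) hbound' k cov hcover hind' t ht
    have hsum : ∀ ω, (∑ α, -Y α ω) = -(∑ α, Y α ω) := fun ω => by
      rw [← Finset.sum_neg_distrib]
    have hmneg : (∫ ω', (∑ α, -Y α ω') ∂μ) = -∫ ω', (∑ α, Y α ω') ∂μ := by
      rw [← integral_neg]
      exact integral_congr_ae (Filter.Eventually.of_forall fun ω => hsum ω)
    have hsets : {ω | t ≤ (∑ α, -Y α ω) - ∫ ω', (∑ α, -Y α ω') ∂μ}
        = {ω | (∑ α, Y α ω) - ∫ ω', (∑ α, Y α ω') ∂μ ≤ -t} := by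
      ext ω
      simp only [Set.mem_setOf_eq, hsum, integral_neg]
      constructor <;> intro <;> linarith
    have hrhs : (∑ α, (-a α - -b α) ^ 2) = ∑ α, (b α - a α) ^ 2 :=
      Finset.sum_congr rfl fun α _ => by ring
    beta_reduce at h
    rw [hsets, hrhs] at h
    exact h
end

section
/- Suppose there is b > 0 with Y_α − 𝔼[Y_α] ≤ b almost surely for every α ∈ 𝒜, set S := Σ_{α∈𝒜} Var(Y_α), and suppose (𝒜_j)_{j=1}^{k} is a proper cover of 𝒜 of size k. Then for all t > 0, ℙ( X − 𝔼[X] ≥ t ) ≤ exp( −8t² / ( 25 k (S + bt/3) ) ). If in addition Y_α − 𝔼[Y_α] ≥ −b almost surely for all α, the same bound holds for ℙ( X − 𝔼[X] ≤ −t ). -/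
open MeasureTheory ProbabilityTheory
open scoped ENNReal BigOperators

lemma fact_ge_aux (n : ℕ) : 2 * 3 ^ n ≤ (n + 2).factorial := by
  induction n with
  | zero => simp [Nat.factorial]
  | succ n ih =>
    have : (n + 3).factorial = (n + 3) * (n + 2).factorial := rfl
    calc 2 * 3 ^ (n+1) = 3 * (2 * 3 ^ n) := by ring
    _ ≤ 3 * (n + 2).factorial := by omega
    _ ≤ (n + 3) * (n + 2).factorial := by
        have := (n+2).factorial_pos; nlinarith
    _ = (n + 3).factorial := this.symm

lemma exp_le_geom {x : ℝ} (h0 : 0 ≤ x) (h3 : x < 3) :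
    Real.exp x ≤ 1 + x + x ^ 2 / (2 * (1 - x / 3)) := by
  have hsum : Summable (fun n : ℕ => x ^ n / n.factorial) :=
    Real.summable_pow_div_factorial x
  have hexp : Real.exp x = ∑' n : ℕ, x ^ n / n.factorial := by
    rw [Real.exp_eq_exp_ℝ, NormedSpace.exp_eq_tsum_div]
  have hsum2 : Summable (fun n : ℕ => x ^ (n + 2) / (n + 2).factorial) :=
    (summable_nat_add_iff 2).2 hsum
  have hsplit : Real.exp x
      = 1 + x + ∑' n : ℕ, x ^ (n + 2) / (n + 2).factorial := by
    rw [hexp, ← Summable.sum_add_tsum_nat_add 2 hsum]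
    simp [Finset.sum_range_succ, Nat.factorial]
  have hx3 : x / 3 < 1 := by linarith
  have hx3' : 0 ≤ x / 3 := by linarith
  have hgeom : Summable (fun n : ℕ => x ^ 2 / 2 * (x / 3) ^ n) :=
    (summable_geometric_of_lt_one hx3' hx3).mul_left _
  have hterm : ∀ n : ℕ, x ^ (n + 2) / (n + 2).factorial ≤ x ^ 2 / 2 * (x / 3) ^ n := by
    intro n
    have hf : (2 * 3 ^ n : ℝ) ≤ ((n + 2).factorial : ℝ) := by
      exact_mod_cast fact_ge_aux n
    have h3n : (0:ℝ) < 3 ^ n := by positivity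
    have hfp : (0:ℝ) < ((n + 2).factorial : ℝ) := by
      exact_mod_cast (n+2).factorial_pos
    rw [div_pow]
    rw [div_le_iff₀ hfp] at *
    have hxn : (0:ℝ) ≤ x ^ n := by positivity
    have h1 : x ^ (n + 2) = x ^ 2 * x ^ n := by ring
    rw [h1]
    calc x ^ 2 * x ^ n = (x ^ 2 * x ^ n / (2 * 3 ^ n)) * (2 * 3 ^ n) := by
          field_simp
    _ ≤ (x ^ 2 * x ^ n / (2 * 3 ^ n)) * ((n + 2).factorial : ℝ) := by
          apply mul_le_mul_of_nonneg_left hf; positivity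
    _ = x ^ 2 / 2 * (x ^ n / 3 ^ n) * ((n + 2).factorial : ℝ) := by
          field_simp
  have htail : ∑' n : ℕ, x ^ (n + 2) / (n + 2).factorial
      ≤ x ^ 2 / (2 * (1 - x / 3)) := by
    calc ∑' n : ℕ, x ^ (n + 2) / (n + 2).factorial
        ≤ ∑' n : ℕ, x ^ 2 / 2 * (x / 3) ^ n := Summable.tsum_le_tsum hterm hsum2 hgeom
    _ = x ^ 2 / 2 * (1 - x / 3)⁻¹ := by
        rw [tsum_mul_left, tsum_geometric_of_lt_one hx3' hx3]
    _ = x ^ 2 / (2 * (1 - x / 3)) := by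
        have hne : (1 - x / 3) ≠ 0 := by intro h; rw [sub_eq_zero] at h; linarith
        field_simp
  linarith [hsplit, htail]

lemma exp_le_quad_of_nonpos {x : ℝ} (hx : x ≤ 0) : Real.exp x ≤ 1 + x + x ^ 2 / 2 := by
  have key : AntitoneOn (fun x : ℝ => 1 + x + x ^ 2 / 2 - Real.exp x) (Set.Iic 0) := by
    have hd : ∀ y : ℝ, HasDerivAt (fun x : ℝ => 1 + x + x ^ 2 / 2 - Real.exp x)
        (1 + y - Real.exp y) y := by
      intro y
      have h1 : HasDerivAt (fun x : ℝ => 1 + x + x ^ 2 / 2) (1 + y) y := by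
        have := ((hasDerivAt_id' y).const_add 1).add
          (((hasDerivAt_pow 2 y)).div_const 2)
        exact this.congr_deriv (by push_cast; ring)
      exact h1.sub (Real.hasDerivAt_exp y)
    apply antitoneOn_of_deriv_nonpos (convex_Iic 0)
    · exact (Continuous.continuousOn (by continuity))
    · intro y hy
      exact (hd y).differentiableAt.differentiableWithinAt
    · intro y hy
      rw [(hd y).deriv]
      have := Real.add_one_le_exp y
      linarith
  have h0 : (0:ℝ) ∈ Set.Iic (0:ℝ) := Set.self_mem_Iic
  have := key (Set.mem_Iic.2 hx) h0 hx
  simp at this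
  linarith [this]


lemma exp_mul_le {z b u : ℝ} (hz : z ≤ b) (hb : 0 ≤ b) (hu : 0 < u) (hub : u * b < 3) :
    Real.exp (u * z) ≤ 1 + u * z + u ^ 2 * z ^ 2 / (2 * (1 - u * b / 3)) := by
  have hub0 : 0 ≤ u * b := by positivity
  have hden : 0 < 1 - u * b / 3 := by linarith
  have hsq : (u * z) ^ 2 = u ^ 2 * z ^ 2 := by ring
  rcases le_or_gt (u * z) 0 with h | h
  · have h1 := exp_le_quad_of_nonpos h
    have h2 : (u * z) ^ 2 / 2 ≤ (u * z) ^ 2 / (2 * (1 - u * b / 3)) := by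
      apply div_le_div_of_nonneg_left (by positivity) (by positivity) (by linarith)
    rw [← hsq]
    linarith
  · have hle : u * z ≤ u * b := by nlinarith
    have hx3 : u * z < 3 := lt_of_le_of_lt hle hub
    have h1 := exp_le_geom h.le hx3
    have h2 : (u * z) ^ 2 / (2 * (1 - u * z / 3)) ≤ (u * z) ^ 2 / (2 * (1 - u * b / 3)) := by
      apply div_le_div_of_nonneg_left (by positivity) (by positivity) (by linarith)
    rw [← hsq]
    linarith

open ProbabilityTheory in
lemma mgf_le_bernstein {Ω : Type*} [MeasurableSpace Ω] {μ : Measure Ω} [IsProbabilityMeasure μ]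
    {Z : Ω → ℝ} (hZm : Measurable Z) (hZ2 : MemLp Z 2 μ) (hmean : μ[Z] = 0)
    {b u : ℝ} (hb : 0 ≤ b) (hub : ∀ᵐ ω ∂μ, Z ω ≤ b) (hu : 0 < u) (hub3 : u * b < 3) :
    mgf Z μ u ≤ Real.exp (u ^ 2 * variance Z μ / (2 * (1 - u * b / 3))) := by
  have hden : 0 < 1 - u * b / 3 := by nlinarith [mul_nonneg hu.le hb]
  have hint1 : Integrable Z μ := hZ2.integrable one_le_two
  have hint2 : Integrable (fun ω => Z ω ^ 2) μ := by
    have := hZ2.integrable_sq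
    simpa [sq] using this
  have hptwise : ∀ᵐ ω ∂μ, Real.exp (u * Z ω)
      ≤ 1 + u * Z ω + u ^ 2 * Z ω ^ 2 / (2 * (1 - u * b / 3)) :=
    hub.mono fun ω h => exp_mul_le h hb hu hub3
  have hintR : Integrable
      (fun ω => 1 + u * Z ω + u ^ 2 * Z ω ^ 2 / (2 * (1 - u * b / 3))) μ := by
    apply Integrable.add
    · exact (integrable_const 1).add (hint1.const_mul u)
    · have : (fun ω => u ^ 2 * Z ω ^ 2 / (2 * (1 - u * b / 3)))
          = fun ω => (u ^ 2 / (2 * (1 - u * b / 3))) * Z ω ^ 2 := by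
        funext ω; ring
      rw [this]
      exact hint2.const_mul _
  have hintexp : Integrable (fun ω => Real.exp (u * Z ω)) μ := by
    apply Integrable.mono' (integrable_const (Real.exp (u * b)))
    · exact ((hZm.const_mul u).exp).aestronglyMeasurable
    · filter_upwards [hub] with ω h
      rw [Real.norm_eq_abs, abs_of_pos (Real.exp_pos _)]
      exact Real.exp_le_exp.2 (by nlinarith)
  have hvar : variance Z μ = ∫ ω, Z ω ^ 2 ∂μ := by
    have := variance_of_integral_eq_zero hZm.aemeasurable hmean
    rw [this]
  have step1 : mgf Z μ u ≤ ∫ ω, (1 + u * Z ω + u ^ 2 * Z ω ^ 2 / (2 * (1 - u * b / 3))) ∂μ :=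
    integral_mono_ae hintexp hintR hptwise
  have step2 : ∫ ω, (1 + u * Z ω + u ^ 2 * Z ω ^ 2 / (2 * (1 - u * b / 3))) ∂μ
      = 1 + u ^ 2 * variance Z μ / (2 * (1 - u * b / 3)) := by
    have e1 : (fun ω => 1 + u * Z ω + u ^ 2 * Z ω ^ 2 / (2 * (1 - u * b / 3)))
        = fun ω => (1 + u * Z ω) + (u ^ 2 / (2 * (1 - u * b / 3))) * Z ω ^ 2 := by
      funext ω; ring
    have hA : Integrable (fun ω => 1 + u * Z ω) μ := by
      exact (integrable_const 1).add (hint1.const_mul u)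
    have hB : Integrable (fun ω => (u ^ 2 / (2 * (1 - u * b / 3))) * Z ω ^ 2) μ :=
      hint2.const_mul _
    have hC : Integrable (fun ω => u * Z ω) μ := hint1.const_mul u
    rw [e1, integral_add hA hB, integral_add (integrable_const 1) hC, integral_const,
      integral_const_mul, integral_const_mul, hvar, hmean]
    simp
    ring
  have step3 : 1 + u ^ 2 * variance Z μ / (2 * (1 - u * b / 3))
      ≤ Real.exp (u ^ 2 * variance Z μ / (2 * (1 - u * b / 3))) := by
    have := Real.add_one_le_exp (u ^ 2 * variance Z μ / (2 * (1 - u * b / 3)))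
    linarith
  linarith [step1, step2.le, step2.ge, step3]

lemma bernstein_upper
    {Ω : Type*} [MeasurableSpace Ω] (μ : Measure Ω) [IsProbabilityMeasure μ]
    {ι : Type*} [Fintype ι]
    (Y : ι → Ω → ℝ) (hmeas : ∀ α, Measurable (Y α))
    (hL2 : ∀ α, MemLp (Y α) 2 μ)
    (b : ℝ) (hb : 0 < b)
    (hupper : ∀ α, ∀ᵐ ω ∂μ, Y α ω - ∫ ω', Y α ω' ∂μ ≤ b)
    (k : ℕ) (cov : Fin k → Finset ι)
    (hcover : ∀ α, ∃ j, α ∈ cov j)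
    (hind : ∀ j, iIndepFun
        (fun α : (cov j : Finset ι) => Y α) μ)
    (t : ℝ) (ht : 0 < t) :
    (μ {ω | t ≤ (∑ α, Y α ω) - ∫ ω', (∑ α, Y α ω') ∂μ}).toReal ≤
        Real.exp (-8 * t ^ 2 /
          (25 * k * ((∑ α, variance (Y α) μ) + b * t / 3))) := by
  classical
  rcases Nat.eq_zero_or_pos k with hk0 | hk
  · -- k = 0 : RHS is exp 0 = 1
    subst hk0
    have h1 : (μ {ω | t ≤ (∑ α, Y α ω) - ∫ ω', (∑ α, Y α ω') ∂μ}).toReal ≤ 1 := by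
      have := prob_le_one (μ := μ) (s := {ω | t ≤ (∑ α, Y α ω) - ∫ ω', (∑ α, Y α ω') ∂μ})
      have := ENNReal.toReal_mono ENNReal.one_ne_top this
      simpa using this
    simpa using h1
  -- abbreviations
  set m : ι → ℝ := fun α => ∫ ω, Y α ω ∂μ with hm
  set Z : ι → Ω → ℝ := fun α ω => Y α ω - m α with hZdef
  have hZmeas : ∀ α, Measurable (Z α) := fun α => (hmeas α).sub_const _
  have hZ2 : ∀ α, MemLp (Z α) 2 μ := fun α => (hL2 α).sub (memLp_const _)
  have hZint : ∀ α, Integrable (Z α) μ := fun α => (hZ2 α).integrable one_le_two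
  have hZmean : ∀ α, μ[Z α] = 0 := fun α => by
    simp [hZdef, integral_sub ((hL2 α).integrable one_le_two) (integrable_const _), hm]
  have hZub : ∀ α, ∀ᵐ ω ∂μ, Z α ω ≤ b := fun α => hupper α
  have hZvar : ∀ α, variance (Z α) μ = variance (Y α) μ := by
    intro α
    have h1 : variance (Z α) μ = μ[(Z α) ^ (2 : ℕ)] :=
      variance_of_integral_eq_zero (hZmeas α).aemeasurable (hZmean α)
    rw [variance_eq_integral (hmeas α).aemeasurable, h1]
    rfl
  set S := ∑ α, variance (Y α) μ with hS
  have hSnn : (0:ℝ) ≤ S := Finset.sum_nonneg fun α _ => variance_nonneg _ _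
  set D := S + b * t / 3 with hD
  have hDpos : (0:ℝ) < D := by
    have h1 : (0:ℝ) < b * t / 3 := by positivity
    rw [hD]
    linarith
  have hintsum : ∫ ω', (∑ α, Y α ω') ∂μ = ∑ α, m α := by
    rw [integral_finset_sum]
    exact fun α _ => (hL2 α).integrable one_le_two
  have hseteq : {ω | t ≤ (∑ α, Y α ω) - ∫ ω', (∑ α, Y α ω') ∂μ}
      = {ω | t ≤ ∑ α, Z α ω} := by
    ext ω
    simp only [Set.mem_setOf_eq, hintsum, hZdef, Finset.sum_sub_distrib]
  rw [hseteq]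
  rcases eq_or_lt_of_le hSnn with hS0 | hSpos
  · -- S = 0 : all variables a.s. constant, tail has measure zero
    have hvar0 : ∀ α, variance (Y α) μ = 0 := by
      intro α
      have := (Finset.sum_eq_zero_iff_of_nonneg
        (fun α _ => variance_nonneg (Y α) μ)).1 hS0.symm
      exact this α (Finset.mem_univ α)
    have hZ0 : ∀ α, ∀ᵐ ω ∂μ, Z α ω = 0 := by
      intro α
      have hev : evariance (Y α) μ = 0 := by
        rw [← (hL2 α).ofReal_variance_eq, hvar0 α, ENNReal.ofReal_zero]
      have := (evariance_eq_zero_iff (X := Y α) (μ := μ)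
        (hmeas α).aemeasurable).1 hev
      filter_upwards [this] with ω hω
      simp [hZdef, hω, hm]
    have hae : ∀ᵐ ω ∂μ, ¬ (t ≤ ∑ α, Z α ω) := by
      filter_upwards [ae_all_iff.2 hZ0] with ω hω
      simp [hω]
      linarith
    have hnull : μ {ω | t ≤ ∑ α, Z α ω} = 0 :=
      measure_eq_zero_iff_ae_notMem.2 hae
    rw [hnull]
    simp
    positivity
  -- main case: S > 0
  have hkR : (0:ℝ) < (k:ℝ) := by exact_mod_cast hk
  set u := t / D with hu_def
  have hu : 0 < u := div_pos ht hDpos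
  set s := u / k with hs_def
  have hs : 0 < s := div_pos hu hkR
  have hub3 : u * b < 3 := by
    rw [hu_def, div_mul_eq_mul_div, div_lt_iff₀ hDpos, hD]
    nlinarith
  have hone_sub : 1 - u * b / 3 = S / D := by
    rw [hu_def]
    field_simp
    rw [hD]
    ring
  -- partition of the index set subordinate to the cover
  choose g hg using hcover
  set A : Fin k → Finset ι := fun j => Finset.univ.filter (fun α => g α = j) with hA
  set X : Fin k → Ω → ℝ := fun j ω => ∑ α ∈ A j, Z α ω with hX
  have hXmeas : ∀ j, Measurable (X j) := fun j =>
    Finset.measurable_sum _ (fun α _ => hZmeas α)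
  have hWX : ∀ ω, ∑ α, Z α ω = ∑ j, X j ω := fun ω =>
    (Finset.sum_fiberwise Finset.univ g (fun α => Z α ω)).symm
  -- integrability of exponentials
  have hint_of_le : ∀ (f : Ω → ℝ) (C : ℝ), Measurable f → (∀ᵐ ω ∂μ, f ω ≤ C) →
      ∀ c : ℝ, 0 ≤ c → Integrable (fun ω => Real.exp (c * f ω)) μ := by
    intro f C hf hC c hc
    apply Integrable.mono' (integrable_const (Real.exp (c * C)))
    · exact ((hf.const_mul c)).exp.aestronglyMeasurable
    · filter_upwards [hC] with ω h
      rw [Real.norm_eq_abs, abs_of_pos (Real.exp_pos _)]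
      exact Real.exp_le_exp.2 (mul_le_mul_of_nonneg_left h hc)
  have hXub : ∀ j, ∀ᵐ ω ∂μ, X j ω ≤ (A j).card * b := by
    intro j
    filter_upwards [ae_all_iff.2 hZub] with ω hω
    calc X j ω ≤ ∑ _α ∈ A j, b := Finset.sum_le_sum (fun α _ => hω α)
    _ = (A j).card * b := by rw [Finset.sum_const, nsmul_eq_mul]
  have hWub : ∀ᵐ ω ∂μ, (∑ α, Z α ω) ≤ (Fintype.card ι) * b := by
    filter_upwards [ae_all_iff.2 hZub] with ω hω
    calc ∑ α, Z α ω ≤ ∑ _α : ι, b := Finset.sum_le_sum (fun α _ => hω α)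
    _ = (Fintype.card ι) * b := by
        rw [Finset.sum_const, nsmul_eq_mul, Finset.card_univ]
  -- Chernoff bound
  have hChern := measure_ge_le_exp_mul_mgf (μ := μ) (X := fun ω => ∑ α, Z α ω) t hs.le
    (hint_of_le _ _ (Finset.measurable_sum _ (fun α _ => hZmeas α)) hWub s hs.le)
  -- mgf of each group factorizes by independence
  have hXmgf : ∀ j, mgf (X j) μ u = ∏ α ∈ A j, mgf (Z α) μ u := by
    intro j
    have hsub : ∀ x ∈ A j, x ∈ cov j := by
      intro x hx
      have h1 := (Finset.mem_filter.1 hx).2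
      rw [← h1]
      exact hg x
    set T : Finset {x // x ∈ cov j} := (A j).subtype (fun x => x ∈ cov j) with hT
    have hmap : T.map (Function.Embedding.subtype _) = A j := Finset.subtype_map_of_mem hsub
    have hindZ : iIndepFun
        (fun β : {x // x ∈ cov j} => Z β.1) μ := by
      have h2 := (hind j).comp (fun β => fun x : ℝ => x - m β.1)
        (fun β => measurable_id.sub_const _)
      exact h2
    have hsum := hindZ.mgf_sum (fun β => hZmeas β.1) T (t := u)
    have h1 : X j = ∑ β ∈ T, (fun β : {x // x ∈ cov j} => Z β.1) β := by
      funext ω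
      rw [Finset.sum_apply]
      show ∑ α ∈ A j, Z α ω = ∑ c ∈ T, Z (↑c) ω
      rw [← hmap, Finset.sum_map]
      rfl
    have h2 : ∏ β ∈ T, mgf (fun ω => Z β.1 ω) μ u = ∏ α ∈ A j, mgf (Z α) μ u := by
      rw [← hmap, Finset.prod_map]
      rfl
    rw [h1]
    rw [hsum]
    exact h2
  -- individual mgf bounds
  have hmgfZ : ∀ α, mgf (Z α) μ u
      ≤ Real.exp (u ^ 2 * variance (Y α) μ / (2 * (1 - u * b / 3))) := by
    intro α
    have h3 := mgf_le_bernstein (hZmeas α) (hZ2 α) (hZmean α) hb.le (hZub α) hu hub3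
    rwa [hZvar α] at h3
  have hXle : ∀ j, mgf (X j) μ u
      ≤ Real.exp (∑ α ∈ A j, u ^ 2 * variance (Y α) μ / (2 * (1 - u * b / 3))) := by
    intro j
    rw [hXmgf j]
    calc ∏ α ∈ A j, mgf (Z α) μ u
        ≤ ∏ α ∈ A j, Real.exp (u ^ 2 * variance (Y α) μ / (2 * (1 - u * b / 3))) :=
          Finset.prod_le_prod (fun α _ => mgf_nonneg) (fun α _ => hmgfZ α)
    _ = Real.exp (∑ α ∈ A j, u ^ 2 * variance (Y α) μ / (2 * (1 - u * b / 3))) :=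
          (Real.exp_sum _ _).symm
  -- Hoelder step
  have hHolder : mgf (fun ω => ∑ α, Z α ω) μ s ≤ ∏ j, (mgf (X j) μ u) ^ ((k:ℝ)⁻¹) := by
    set F : Fin k → Ω → ℝ≥0∞ := fun j ω => ENNReal.ofReal (Real.exp (u * X j ω)) with hF
    have hFmeas : ∀ j : Fin k, j ∈ (Finset.univ : Finset (Fin k)) → AEMeasurable (F j) μ := fun j _ =>
      (((hXmeas j).const_mul u).exp.ennreal_ofReal).aemeasurable
    have hpsum : ∑ _j : Fin k, (k:ℝ)⁻¹ = 1 := by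
      rw [Finset.sum_const, Finset.card_univ, Fintype.card_fin, nsmul_eq_mul]
      field_simp
    have hholder := ENNReal.lintegral_prod_norm_pow_le (μ := μ) Finset.univ hFmeas hpsum
      (fun j _ => by positivity)
    have hptw : ∀ ω, ENNReal.ofReal (Real.exp (s * ∑ α, Z α ω))
        = ∏ j, (F j ω) ^ ((k:ℝ)⁻¹) := by
      intro ω
      have h2 : Real.exp (s * ∑ α, Z α ω) = ∏ j, (Real.exp (u * X j ω)) ^ ((k:ℝ)⁻¹) := by
        have h3 : ∀ j : Fin k, (Real.exp (u * X j ω)) ^ ((k:ℝ)⁻¹)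
            = Real.exp (u * X j ω * (k:ℝ)⁻¹) := fun j => (Real.exp_mul _ _).symm
        simp only [h3]
        rw [← Real.exp_sum]
        congr 1
        rw [hWX ω, Finset.mul_sum]
        apply Finset.sum_congr rfl
        intro j _
        rw [hs_def]
        ring
      rw [h2, ENNReal.ofReal_prod_of_nonneg (fun j _ => by positivity)]
      apply Finset.prod_congr rfl
      intro j _
      rw [ENNReal.ofReal_rpow_of_pos (Real.exp_pos _)]
    have hlhs : mgf (fun ω => ∑ α, Z α ω) μ s
        = (∫⁻ ω, ENNReal.ofReal (Real.exp (s * ∑ α, Z α ω)) ∂μ).toReal := by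
      rw [mgf, integral_eq_lintegral_of_nonneg_ae
        (Filter.Eventually.of_forall fun ω => (Real.exp_pos _).le)
        (((Finset.measurable_sum _ (fun α _ => hZmeas α)).const_mul s).exp.aestronglyMeasurable)]
    have hrhsj : ∀ j, ∫⁻ ω, F j ω ∂μ = ENNReal.ofReal (mgf (X j) μ u) := fun j =>
      (ofReal_integral_eq_lintegral_ofReal
        (hint_of_le _ _ (hXmeas j) (hXub j) u hu.le)
        (Filter.Eventually.of_forall fun ω => (Real.exp_pos _).le)).symm
    calc mgf (fun ω => ∑ α, Z α ω) μ s
        = (∫⁻ ω, ENNReal.ofReal (Real.exp (s * ∑ α, Z α ω)) ∂μ).toReal := hlhs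
      _ ≤ (∏ j, (∫⁻ ω, F j ω ∂μ) ^ ((k:ℝ)⁻¹)).toReal := by
          apply ENNReal.toReal_mono
          · apply ne_of_lt
            apply ENNReal.prod_lt_top
            intro j _
            rw [hrhsj j]
            exact ENNReal.rpow_lt_top_of_nonneg (by positivity) ENNReal.ofReal_ne_top
          · calc ∫⁻ ω, ENNReal.ofReal (Real.exp (s * ∑ α, Z α ω)) ∂μ
                = ∫⁻ ω, ∏ j, (F j ω) ^ ((k:ℝ)⁻¹) ∂μ := lintegral_congr fun ω => hptw ω
              _ ≤ ∏ j, (∫⁻ ω, F j ω ∂μ) ^ ((k:ℝ)⁻¹) := hholder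
      _ = ∏ j, (mgf (X j) μ u) ^ ((k:ℝ)⁻¹) := by
          rw [ENNReal.toReal_prod]
          apply Finset.prod_congr rfl
          intro j _
          rw [hrhsj j, ← ENNReal.toReal_rpow, ENNReal.toReal_ofReal mgf_nonneg]
  -- put everything together
  have hfib : ∑ j, ∑ α ∈ A j, u ^ 2 * variance (Y α) μ / (2 * (1 - u * b / 3))
      = u ^ 2 * S / (2 * (1 - u * b / 3)) := by
    rw [Finset.sum_fiberwise Finset.univ g
      (fun α => u ^ 2 * variance (Y α) μ / (2 * (1 - u * b / 3))), hS]
    rw [← Finset.sum_div, ← Finset.mul_sum]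
  calc (μ {ω | t ≤ ∑ α, Z α ω}).toReal
      ≤ Real.exp (-s * t) * mgf (fun ω => ∑ α, Z α ω) μ s := hChern
    _ ≤ Real.exp (-s * t) * ∏ j, (mgf (X j) μ u) ^ ((k:ℝ)⁻¹) :=
        mul_le_mul_of_nonneg_left hHolder (Real.exp_pos _).le
    _ ≤ Real.exp (-s * t) * ∏ j, (Real.exp
          (∑ α ∈ A j, u ^ 2 * variance (Y α) μ / (2 * (1 - u * b / 3)))) ^ ((k:ℝ)⁻¹) := by
        apply mul_le_mul_of_nonneg_left _ (Real.exp_pos _).le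
        exact Finset.prod_le_prod (fun j _ => Real.rpow_nonneg mgf_nonneg _)
          (fun j _ => Real.rpow_le_rpow mgf_nonneg (hXle j) (by positivity))
    _ = Real.exp (-s * t + (k:ℝ)⁻¹ * (u ^ 2 * S / (2 * (1 - u * b / 3)))) := by
        have h3 : ∀ j : Fin k, (Real.exp
            (∑ α ∈ A j, u ^ 2 * variance (Y α) μ / (2 * (1 - u * b / 3)))) ^ ((k:ℝ)⁻¹)
            = Real.exp ((∑ α ∈ A j, u ^ 2 * variance (Y α) μ / (2 * (1 - u * b / 3)))
                * (k:ℝ)⁻¹) := fun j => (Real.exp_mul _ _).symm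
        simp only [h3]
        rw [← Real.exp_sum, ← Real.exp_add]
        congr 1
        rw [← Finset.sum_mul, hfib]
        ring
    _ ≤ Real.exp (-8 * t ^ 2 / (25 * (k:ℝ) * D)) := by
        rw [Real.exp_le_exp, hone_sub]
        have hkne : (k:ℝ) ≠ 0 := ne_of_gt hkR
        have hDne : D ≠ 0 := ne_of_gt hDpos
        have hSne : S ≠ 0 := ne_of_gt hSpos
        rw [hs_def, hu_def]
        have key : -(t / D / (k:ℝ)) * t + (k:ℝ)⁻¹ * ((t / D) ^ 2 * S / (2 * (S / D)))
            = -(t ^ 2) / (2 * (k:ℝ) * D) := by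
          field_simp
          ring
        rw [key]
        rw [div_le_div_iff₀ (by positivity) (by positivity)]
        nlinarith [sq_nonneg t, mul_pos hkR hDpos, sq_nonneg (t*(25 * (k:ℝ) * D))]
    _ = Real.exp (-8 * t ^ 2 / (25 * (k:ℝ) * (S + b * t / 3))) := by rw [← hD]



/-- Bernstein-type concentration inequality for a sum `X = Σ_α Y_α` of possibly
dependent random variables, whose upper fluctuations are bounded by `b`, admitting a
proper cover of size `k` (Janson): with `S = Σ_α Var(Y_α)`,
`ℙ(X − 𝔼X ≥ t) ≤ exp(−8t²/(25 k (S + bt/3)))`; if moreover the fluctuations are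
bounded below by `−b`, the same bound holds for the lower tail. -/
theorem bernstein_dependent_proper_cover
    {Ω : Type*} [MeasurableSpace Ω] (μ : Measure Ω) [IsProbabilityMeasure μ]
    {ι : Type*} [Fintype ι]
    (Y : ι → Ω → ℝ) (hmeas : ∀ α, Measurable (Y α))
    (hL2 : ∀ α, MemLp (Y α) 2 μ)
    (b : ℝ) (hb : 0 < b)
    (hupper : ∀ α, ∀ᵐ ω ∂μ, Y α ω - ∫ ω', Y α ω' ∂μ ≤ b)
    (k : ℕ) (cov : Fin k → Finset ι)
    (hcover : ∀ α, ∃ j, α ∈ cov j)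
    (hind : ∀ j, iIndepFun
        (fun α : (cov j : Finset ι) => Y α) μ)
    (t : ℝ) (ht : 0 < t) :
    (μ {ω | t ≤ (∑ α, Y α ω) - ∫ ω', (∑ α, Y α ω') ∂μ}).toReal ≤
        Real.exp (-8 * t ^ 2 /
          (25 * k * ((∑ α, ProbabilityTheory.variance (Y α) μ) + b * t / 3))) ∧
    ((∀ α, ∀ᵐ ω ∂μ, -b ≤ Y α ω - ∫ ω', Y α ω' ∂μ) →
      (μ {ω | (∑ α, Y α ω) - ∫ ω', (∑ α, Y α ω') ∂μ ≤ -t}).toReal ≤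
        Real.exp (-8 * t ^ 2 /
          (25 * k * ((∑ α, ProbabilityTheory.variance (Y α) μ) + b * t / 3)))) := by
  constructor
  · exact bernstein_upper μ Y hmeas hL2 b hb hupper k cov hcover hind t ht
  · intro hlow
    have hneg := bernstein_upper μ (fun α ω => -Y α ω) (fun α => (hmeas α).neg)
      (fun α => (hL2 α).neg) b hb
      (by
        intro α
        have hcint : ∫ ω', -Y α ω' ∂μ = -∫ ω', Y α ω' ∂μ := by
          rw [← integral_neg]
        filter_upwards [hlow α] with ω hω
        rw [hcint]
        linarith)
      k cov hcover
      (fun j => (hind j).comp (fun β => fun x : ℝ => -x) (fun β => measurable_neg))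
      t ht
    have hvar : ∀ α : ι, ProbabilityTheory.variance (fun ω => -Y α ω) μ
        = ProbabilityTheory.variance (Y α) μ := by
      intro α
      have h1 := ProbabilityTheory.variance_const_mul (-1) (Y α) μ
      simpa using h1
    have hcint : ∫ ω', (∑ α, -Y α ω') ∂μ = -∫ ω', (∑ α, Y α ω') ∂μ := by
      rw [← integral_neg]
      congr 1
      funext ω
      simp
    have hset : {ω | t ≤ (∑ α, -Y α ω) - ∫ ω', (∑ α, -Y α ω') ∂μ}
        = {ω | (∑ α, Y α ω) - ∫ ω', (∑ α, Y α ω') ∂μ ≤ -t} := by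
      ext ω
      simp only [Set.mem_setOf_eq, Finset.sum_neg_distrib, integral_neg]
      constructor <;> intro h <;> linarith
    rw [hset] at hneg
    have hvarsum : (∑ α, ProbabilityTheory.variance (fun ω => -Y α ω) μ)
        = ∑ α, ProbabilityTheory.variance (Y α) μ :=
      Finset.sum_congr rfl fun α _ => hvar α
    rwa [hvarsum] at hneg
end

section
/- Let f : S × S → ℝ be measurable with a ≤ f(u,v) ≤ b for all u, v ∈ S, where a < b are real numbers. Then for every t > 0, ℙ( (1/(nm)) Σ_{i=1}^{n} Σ_{j=1}^{m} f(x_i, y_j) − 𝔼[f(x_1, y_1)] ≥ t ) ≤ exp( −2 n m t² / ( (n + m − 1)(b − a)² ) ). -/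
open MeasureTheory ProbabilityTheory
open scoped BigOperators

open Real

private lemma logisticBound {p : ℝ} (hp0 : 0 ≤ p) (hp1 : p ≤ 1) (h : ℝ) :
    -(h * p) + Real.log (1 - p + p * Real.exp h) ≤ h ^ 2 / 8 := by
  set D : ℝ → ℝ := fun u => 1 - p + p * Real.exp u with hD
  have hDpos : ∀ u, 0 < D u := by
    intro u
    have he : 0 < Real.exp u := Real.exp_pos u
    have : 0 < 1 - p + p * Real.exp u := by rcases lt_or_eq_of_le hp1 with h1 | h1 <;> nlinarith
    simpa [hD] using this
  set L' : ℝ → ℝ := fun u => -p + p * Real.exp u / D u with hL'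
  set F : ℝ → ℝ := fun u => u ^ 2 / 8 - (-(u * p) + Real.log (D u)) with hF
  set F' : ℝ → ℝ := fun u => u / 4 - L' u with hF'
  have hDder : ∀ u, HasDerivAt D (p * Real.exp u) u := by
    intro u
    exact ((Real.hasDerivAt_exp u).const_mul p).const_add (1 - p)
  have hFder : ∀ u, HasDerivAt F (F' u) u := by
    intro u
    have hlog : HasDerivAt (fun v => Real.log (D v)) (p * Real.exp u / D u) u :=
      (hDder u).log (hDpos u).ne'
    have h1 : HasDerivAt (fun v : ℝ => v ^ 2 / 8) (u / 4) u := by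
      have := (hasDerivAt_pow 2 u).div_const 8
      convert! this using 1
      ring
    have h2 : HasDerivAt (fun v => -(v * p) + Real.log (D v)) (L' u) u := by
      have hm : HasDerivAt (fun v : ℝ => -(v * p)) (-p) u := by
        exact ((hasDerivAt_id u).mul_const p).neg.congr_deriv (by simp)
      exact hm.add hlog
    exact h1.sub h2
  have hF'der : ∀ u, HasDerivAt F'
      (1 / 4 - (p * Real.exp u * D u - p * Real.exp u * (p * Real.exp u)) / (D u) ^ 2) u := by
    intro u
    have hq : HasDerivAt (fun v => p * Real.exp v / D v)
        ((p * Real.exp u * D u - p * Real.exp u * (p * Real.exp u)) / (D u) ^ 2) u :=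
      ((Real.hasDerivAt_exp u).const_mul p).div (hDder u) (hDpos u).ne'
    have h1 : HasDerivAt (fun v : ℝ => v / 4) (1 / 4) u := by
      simpa using (hasDerivAt_id u).div_const 4
    have h2 : HasDerivAt L' ((p * Real.exp u * D u - p * Real.exp u * (p * Real.exp u)) / (D u) ^ 2) u := by
      simpa [hL'] using (hq.const_add (-p))
    exact h1.sub h2
  have hF'' : ∀ u, 0 ≤ 1 / 4 - (p * Real.exp u * D u - p * Real.exp u * (p * Real.exp u)) / (D u) ^ 2 := by
    intro u
    have hDu := hDpos u
    have he : 0 < Real.exp u := Real.exp_pos u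
    rw [sub_nonneg, div_le_iff₀ (by positivity)]
    have hDdef : D u = 1 - p + p * Real.exp u := rfl
    nlinarith [sq_nonneg (1 - p - p * Real.exp u)]
  have hmono : Monotone F' :=
    monotone_of_deriv_nonneg (fun u => (hF'der u).differentiableAt)
      (fun u => by rw [(hF'der u).deriv]; exact hF'' u)
  have hF'0 : F' 0 = 0 := by
    simp [hF', hL', hD]
  have hF0 : F 0 = 0 := by
    simp [hF, hD]
  have hFdiff : Differentiable ℝ F := fun u => (hFder u).differentiableAt
  have key : ∀ u, 0 ≤ F u := by
    intro u
    rcases le_total 0 u with hu | hu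
    · have hmF : MonotoneOn F (Set.Ici 0) := by
        apply monotoneOn_of_deriv_nonneg (convex_Ici 0) hFdiff.continuous.continuousOn
          (fun v _ => (hFder v).differentiableAt.differentiableWithinAt)
        intro v hv
        rw [interior_Ici] at hv
        rw [(hFder v).deriv]
        have := hmono (le_of_lt hv)
        rw [hF'0] at this
        linarith
      have := hmF (Set.self_mem_Ici) (Set.mem_Ici.mpr hu) hu
      rw [hF0] at this
      exact this
    · have hmF : AntitoneOn F (Set.Iic 0) := by
        apply antitoneOn_of_deriv_nonpos (convex_Iic 0) hFdiff.continuous.continuousOn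
          (fun v _ => (hFder v).differentiableAt.differentiableWithinAt)
        intro v hv
        rw [interior_Iic] at hv
        rw [(hFder v).deriv]
        have := hmono (le_of_lt hv)
        rw [hF'0] at this
        linarith
      have := hmF (Set.mem_Iic.mpr hu) (Set.self_mem_Iic) hu
      rw [hF0] at this
      exact this
  have := key h
  simp only [hF, sub_nonneg] at this
  linarith [this]


private lemma mgf_le_of_mem_Icc {Ω : Type*} [MeasurableSpace Ω] {μ : Measure Ω}
    [IsProbabilityMeasure μ] {X : Ω → ℝ} (hX : Measurable X) {a b : ℝ} (hab : a ≤ b)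
    (hXab : ∀ ω, X ω ∈ Set.Icc a b) (hcent : ∫ ω, X ω ∂μ = 0) (s : ℝ) :
    mgf X μ s ≤ Real.exp (s ^ 2 * (b - a) ^ 2 / 8) := by
  have hXint : Integrable X μ := by
    refine (integrable_const (max |a| |b|)).mono' hX.aestronglyMeasurable ?_
    filter_upwards with ω
    have h1 := (hXab ω).1
    have h2 := (hXab ω).2
    rw [Real.norm_eq_abs, abs_le]
    constructor
    · have : -(max |a| |b|) ≤ -|a| := by simp [neg_le_neg_iff]
      have ha : -|a| ≤ a := neg_abs_le a
      linarith
    · have : |b| ≤ max |a| |b| := le_max_right _ _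
      have hb : b ≤ |b| := le_abs_self b
      linarith
  have ha0 : a ≤ 0 := by
    have : ∫ ω, (a : ℝ) ∂μ ≤ ∫ ω, X ω ∂μ :=
      integral_mono (integrable_const a) hXint fun ω => (hXab ω).1
    simpa [hcent] using this
  have hb0 : 0 ≤ b := by
    have : ∫ ω, X ω ∂μ ≤ ∫ ω, (b : ℝ) ∂μ :=
      integral_mono hXint (integrable_const b) fun ω => (hXab ω).2
    simpa [hcent] using this
  rcases eq_or_lt_of_le hab with heq | hlt
  · -- a = b forces X = 0
    have ha : a = 0 := le_antisymm ha0 (heq ▸ hb0)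
    have hX0 : ∀ ω, X ω = 0 := fun ω =>
      le_antisymm (ha ▸ heq ▸ (hXab ω).2) (ha ▸ (hXab ω).1)
    have : mgf X μ s = 1 := by
      simp only [mgf]
      rw [integral_congr_ae (Filter.Eventually.of_forall fun ω => by
        simp [hX0 ω] : (fun ω => Real.exp (s * X ω)) =ᵐ[μ] fun _ => (1:ℝ))]
      simp
    rw [this]
    exact Real.one_le_exp (by positivity)
  · set p : ℝ := -a / (b - a) with hp
    have hba : 0 < b - a := sub_pos.mpr hlt
    have hp0 : 0 ≤ p := div_nonneg (by linarith) hba.le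
    have hp1 : p ≤ 1 := by
      rw [div_le_one hba]; linarith
    -- pointwise convexity bound
    have hpt : ∀ ω, Real.exp (s * X ω) ≤
        (b - X ω) / (b - a) * Real.exp (s * a) + (X ω - a) / (b - a) * Real.exp (s * b) := by
      intro ω
      have h1 := (hXab ω).1
      have h2 := (hXab ω).2
      have hθ0 : 0 ≤ (X ω - a) / (b - a) := div_nonneg (by linarith) hba.le
      have hθ0' : 0 ≤ (b - X ω) / (b - a) := div_nonneg (by linarith) hba.le
      have hθs : (b - X ω) / (b - a) + (X ω - a) / (b - a) = 1 := by
        field_simp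
        ring
      have := convexOn_exp.2 (Set.mem_univ (s * a)) (Set.mem_univ (s * b)) hθ0' hθ0 hθs
      simp only [smul_eq_mul] at this
      have harg : (b - X ω) / (b - a) * (s * a) + (X ω - a) / (b - a) * (s * b) = s * X ω := by
        field_simp
        ring
      rwa [harg] at this
    -- integrate
    have hint1 : Integrable (fun ω => Real.exp (s * X ω)) μ := by
      refine (integrable_const (Real.exp (|s| * (|a| + |b|)))).mono'
        ((hX.const_mul s).exp.aestronglyMeasurable) ?_
      filter_upwards with ω
      rw [Real.norm_eq_abs, Real.abs_exp]
      apply Real.exp_le_exp.mpr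
      have h1 := (hXab ω).1
      have h2 := (hXab ω).2
      have hXabs : |X ω| ≤ |a| + |b| := by
        rw [abs_le]
        constructor
        · have := neg_abs_le a; have := abs_nonneg b; linarith
        · have := le_abs_self b; have := abs_nonneg a; linarith
      calc s * X ω ≤ |s * X ω| := le_abs_self _
        _ = |s| * |X ω| := abs_mul _ _
        _ ≤ |s| * (|a| + |b|) := by
            apply mul_le_mul_of_nonneg_left hXabs (abs_nonneg s)
    set C : ℝ := (b * Real.exp (s * a) - a * Real.exp (s * b)) / (b - a) with hC
    set K : ℝ := (Real.exp (s * b) - Real.exp (s * a)) / (b - a) with hK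
    have hpt' : ∀ ω, Real.exp (s * X ω) ≤ C + X ω * K := by
      intro ω
      refine (hpt ω).trans_eq ?_
      rw [hC, hK]
      field_simp
      ring
    have hmgf_le : mgf X μ s ≤ (1 - p) * Real.exp (s * a) + p * Real.exp (s * b) := by
      have hR : Integrable (fun ω => C + X ω * K) μ :=
        (integrable_const C).add (hXint.mul_const K)
      have h1 : mgf X μ s ≤ ∫ ω, (C + X ω * K) ∂μ := integral_mono hint1 hR hpt'
      have h2 : ∫ ω, (C + X ω * K) ∂μ = C := by
        rw [integral_add (integrable_const C) (hXint.mul_const K), integral_mul_const, hcent]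
        simp
      rw [h2] at h1
      refine h1.trans_eq ?_
      rw [hC, hp]
      field_simp
      ring
    refine hmgf_le.trans ?_
    -- now the analytic bound with h = s * (b - a)
    set h : ℝ := s * (b - a) with hh
    have hD : (0:ℝ) < 1 - p + p * Real.exp h := by
      have := Real.exp_pos h
      rcases lt_or_eq_of_le hp1 with h1 | h1 <;> nlinarith
    have hsa : s * a = -(h * p) := by
      rw [hh, hp]; field_simp
    have hsb : s * b = -(h * p) + h := by
      rw [hh, hp]; field_simp; ring
    have : (1 - p) * Real.exp (s * a) + p * Real.exp (s * b)
        = Real.exp (-(h * p) + Real.log (1 - p + p * Real.exp h)) := by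
      rw [Real.exp_add, Real.exp_log hD, hsa, hsb, Real.exp_add]
      ring
    rw [this]
    apply Real.exp_le_exp.mpr
    refine (logisticBound hp0 hp1 h).trans ?_
    rw [hh, mul_pow]


private lemma iIndepFun_reindex {Ω ι ι' β : Type*} [MeasurableSpace Ω]
    {μ : Measure Ω} [mβ : MeasurableSpace β]
    {g : ι → Ω → β} (h : iIndepFun g μ)
    (e : ι' → ι) (he : Function.Injective e) :
    iIndepFun (fun k => g (e k)) μ := by
  classical
  rw [iIndepFun_iff_measure_inter_preimage_eq_mul] at h ⊢
  intro S sets hsets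
  have key := h (S.image e) (sets := fun j => ⋂ k ∈ S.filter (fun k => e k = j), sets k) ?_
  · have hval : ∀ k ∈ S, (⋂ k' ∈ S.filter (fun k' => e k' = e k), sets k') = sets k := by
      intro k hk
      have : S.filter (fun k' => e k' = e k) = {k} := by
        ext k'
        simp only [Finset.mem_filter, Finset.mem_singleton]
        constructor
        · rintro ⟨_, hek⟩; exact he hek
        · rintro rfl; exact ⟨hk, rfl⟩
      rw [this]
      simp
    rw [Finset.set_biInter_finset_image, Finset.prod_image (fun k hk k' hk' hkk' => he hkk')] at key
    have hL : (⋂ i ∈ S, g (e i) ⁻¹' sets i)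
        = ⋂ y ∈ S, g (e y) ⁻¹' ⋂ k ∈ S.filter (fun k => e k = e y), sets k :=
      Set.iInter₂_congr fun k hk => by rw [hval k hk]
    rw [hL, key]
    exact Finset.prod_congr rfl fun k hk => by rw [hval k hk]
  · intro j hj
    exact MeasurableSet.biInter (S.filter _).countable_toSet
      (fun k hk => hsets k (Finset.mem_of_mem_filter k hk))

private lemma iIndepFun_pair {Ω S : Type*} [MeasurableSpace Ω] {μ : Measure Ω}
    [IsProbabilityMeasure μ] [mS : MeasurableSpace S] {ι : Type*}
    {g : ι → Ω → S} (hg : ∀ i, Measurable (g i))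
    (hindep : iIndepFun g μ)
    {d : ℕ} (σ τ : Fin d → ι)
    (hinj : Function.Injective (Sum.elim σ τ)) :
    iIndepFun (fun l ω => (g (σ l) ω, g (τ l) ω)) μ := by
  classical
  have h2 : iIndepFun (fun k : Fin d ⊕ Fin d => g (Sum.elim σ τ k)) μ :=
    iIndepFun_reindex hindep _ hinj
  -- π-systems
  set P : Fin d → Set (Set Ω) := fun l =>
    {t | ∃ A B : Set S, MeasurableSet A ∧ MeasurableSet B ∧
      t = g (σ l) ⁻¹' A ∩ g (τ l) ⁻¹' B} with hP
  rw [iIndepFun_iff_iIndep]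
  refine iIndepSets.iIndep (fun l => ?hle) P (fun l => ?hpi) (fun l => ?hgen) ?hind
  case hle =>
    exact Measurable.comap_le ((hg (σ l)).prodMk (hg (τ l)))
  case hpi =>
    rintro t1 ⟨A, B, hA, hB, rfl⟩ t2 ⟨A', B', hA', hB', rfl⟩ _
    exact ⟨A ∩ A', B ∩ B', hA.inter hA', hB.inter hB', by
      ext ω; simp only [Set.mem_inter_iff, Set.mem_preimage]; tauto⟩
  case hgen =>
    rw [← generateFrom_prod, MeasurableSpace.comap_generateFrom]
    congr 1
    ext t
    simp only [Set.mem_image, Set.mem_image2, Set.mem_setOf_eq, hP]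
    constructor
    · rintro ⟨u, ⟨A, hA, B, hB, rfl⟩, rfl⟩
      exact ⟨A, B, hA, hB, Set.mk_preimage_prod _ _⟩
    · rintro ⟨A, B, hA, hB, rfl⟩
      exact ⟨A ×ˢ B, ⟨A, hA, B, hB, rfl⟩, Set.mk_preimage_prod _ _⟩
  case hind =>
    intro s F hF
    have hchoice : ∀ l, ∃ A B : Set S, MeasurableSet A ∧ MeasurableSet B ∧
        (l ∈ s → F l = g (σ l) ⁻¹' A ∩ g (τ l) ⁻¹' B) := by
      intro l
      by_cases hl : l ∈ s
      · obtain ⟨A, B, hA, hB, hFl⟩ := hF l hl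
        exact ⟨A, B, hA, hB, fun _ => hFl⟩
      · exact ⟨Set.univ, Set.univ, MeasurableSet.univ, MeasurableSet.univ, fun h => absurd h hl⟩
    choose A B hA hB hFeq using hchoice
    have hset : (⋂ l ∈ s, F l) =
        ⋂ k ∈ s.disjSum s, g (Sum.elim σ τ k) ⁻¹' (Sum.elim A B k) := by
      ext ω
      simp only [Set.mem_iInter, Finset.mem_disjSum]
      constructor
      · intro hω k hk
        rcases hk with ⟨l, hl, rfl⟩ | ⟨l, hl, rfl⟩
        · have := hω l hl; rw [hFeq l hl] at this; exact this.1
        · have := hω l hl; rw [hFeq l hl] at this; exact this.2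
      · intro hω l hl
        rw [hFeq l hl]
        exact ⟨hω (Sum.inl l) (Or.inl ⟨l, hl, rfl⟩), hω (Sum.inr l) (Or.inr ⟨l, hl, rfl⟩)⟩
    have hmeas : ∀ k ∈ s.disjSum s, MeasurableSet (Sum.elim A B k) := by
      rintro (l | l) _
      · exact hA l
      · exact hB l
    refine Filter.Eventually.of_forall fun u => ?_
    simp only [Kernel.const_apply]
    rw [hset, iIndepFun_iff_measure_inter_preimage_eq_mul.mp h2 (s.disjSum s) hmeas,
      Finset.prod_disjSum]
    simp only [Sum.elim_inl, Sum.elim_inr]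
    rw [← Finset.prod_mul_distrib]
    refine Finset.prod_congr rfl fun l hl => ?_
    rw [hFeq l hl]
    have hIF : IndepFun (g (σ l)) (g (τ l)) μ :=
      h2.indepFun (show (Sum.inl l : Fin d ⊕ Fin d) ≠ Sum.inr l by simp)
    exact (hIF.measure_inter_preimage_eq_mul _ _ (hA l) (hB l)).symm


private lemma integrable_exp_of_bounded {Ω : Type*} [MeasurableSpace Ω] {μ : Measure Ω}
    [IsProbabilityMeasure μ] {X : Ω → ℝ} (hX : Measurable X) {B : ℝ} (h : ∀ ω, X ω ≤ B) :
    Integrable (fun ω => Real.exp (X ω)) μ := by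
  refine (integrable_const (Real.exp B)).mono' hX.exp.aestronglyMeasurable ?_
  filter_upwards with ω
  rw [Real.norm_eq_abs, Real.abs_exp]
  exact Real.exp_le_exp.mpr (h ω)

set_option maxHeartbeats 2000000 in
/-- Hoeffding-type concentration for grid sampling: for a bounded measurable
`f : S × S → ℝ` and a grid sampling `(x_i, y_j)` built from two independent i.i.d.
families, `ℙ( (1/(nm)) Σ_{i,j} f(x_i,y_j) − 𝔼 f(x_1,y_1) ≥ t ) ≤
exp(−2nm t² / ((n+m−1)(b−a)²))`. -/
theorem grid_sampling_hoeffding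
    {Ω : Type*} [MeasurableSpace Ω] (μ : Measure Ω) [IsProbabilityMeasure μ]
    {S : Type*} [MeasurableSpace S]
    {n m : ℕ} (hn : 0 < n) (hm : 0 < m)
    (x : Fin n → Ω → S) (y : Fin m → Ω → S)
    (hxm : ∀ i, Measurable (x i)) (hym : ∀ j, Measurable (y j))
    (hindep : iIndepFun (β := fun _ : Fin n ⊕ Fin m => S)
        (Sum.elim x y) μ)
    (hxid : ∀ i, IdentDistrib (x i) (x ⟨0, hn⟩) μ μ)
    (hyid : ∀ j, IdentDistrib (y j) (y ⟨0, hm⟩) μ μ)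
    (f : S → S → ℝ) (hf : Measurable fun p : S × S => f p.1 p.2)
    (a b : ℝ) (hab : a < b)
    (hfb : ∀ u v, a ≤ f u v ∧ f u v ≤ b)
    (t : ℝ) (ht : 0 < t) :
    (μ {ω | t ≤ (1 / ((n : ℝ) * m)) * (∑ i, ∑ j, f (x i ω) (y j ω))
        - ∫ ω', f (x ⟨0, hn⟩ ω') (y ⟨0, hm⟩ ω') ∂μ}).toReal ≤
      Real.exp (-2 * n * m * t ^ 2 / (((n : ℝ) + m - 1) * (b - a) ^ 2)) := by
  classical
  haveI : NeZero n := ⟨hn.ne'⟩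
  haveI : NeZero m := ⟨hm.ne'⟩
  have hdn : min n m ≤ n := min_le_left n m
  have hdm : min n m ≤ m := min_le_right n m
  set d : ℕ := min n m with hdd
  have hd0 : 0 < d := lt_min hn hm
  have hdR : (0:ℝ) < d := Nat.cast_pos.mpr hd0
  have hba : (0:ℝ) < b - a := sub_pos.mpr hab
  set E : ℝ := ∫ ω', f (x ⟨0, hn⟩ ω') (y ⟨0, hm⟩ ω') ∂μ with hE
  set X : Ω → ℝ := fun ω => 1 / ((n : ℝ) * m) * (∑ i, ∑ j, f (x i ω) (y j ω)) - E with hXdef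
  -- (i) all pair expectations equal E
  have hpm : ∀ (i : Fin n) (j : Fin m), Measurable fun ω => f (x i ω) (y j ω) :=
    fun i j => hf.comp ((hxm i).prodMk (hym j))
  have hint_eq : ∀ (i : Fin n) (j : Fin m), ∫ ω, f (x i ω) (y j ω) ∂μ = E := by
    intro i j
    have hIF : IndepFun (x i) (y j) μ :=
      hindep.indepFun (show (Sum.inl i : Fin n ⊕ Fin m) ≠ Sum.inr j by simp)
    have hIF0 : IndepFun (x ⟨0, hn⟩) (y ⟨0, hm⟩) μ :=
      hindep.indepFun (show (Sum.inl ⟨0, hn⟩ : Fin n ⊕ Fin m) ≠ Sum.inr ⟨0, hm⟩ by simp)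
    have hmap : Measure.map (fun ω => (x i ω, y j ω)) μ
        = (Measure.map (x i) μ).prod (Measure.map (y j) μ) :=
      (indepFun_iff_map_prod_eq_prod_map_map (hxm i).aemeasurable (hym j).aemeasurable).mp hIF
    have hmap0 : Measure.map (fun ω => (x ⟨0, hn⟩ ω, y ⟨0, hm⟩ ω)) μ
        = (Measure.map (x ⟨0, hn⟩) μ).prod (Measure.map (y ⟨0, hm⟩) μ) :=
      (indepFun_iff_map_prod_eq_prod_map_map (hxm _).aemeasurable (hym _).aemeasurable).mp hIF0
    have hid : IdentDistrib (fun ω => (x i ω, y j ω)) (fun ω => (x ⟨0, hn⟩ ω, y ⟨0, hm⟩ ω)) μ μ :=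
      ⟨((hxm i).prodMk (hym j)).aemeasurable, ((hxm _).prodMk (hym _)).aemeasurable, by
        rw [hmap, hmap0, (hxid i).map_eq, (hyid j).map_eq]⟩
    have := (hid.comp hf).integral_eq
    simpa [Function.comp, hE] using this
  -- integrability of pair terms
  have hfint : ∀ (i : Fin n) (j : Fin m), Integrable (fun ω => f (x i ω) (y j ω)) μ := by
    intro i j
    refine (integrable_const (max |a| |b|)).mono' (hpm i j).aestronglyMeasurable ?_
    filter_upwards with ω
    obtain ⟨h1, h2⟩ := hfb (x i ω) (y j ω)
    rw [Real.norm_eq_abs, abs_le]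
    constructor
    · have := neg_abs_le a
      have : -|a| ≤ a := neg_abs_le a
      have hmax : |a| ≤ max |a| |b| := le_max_left _ _
      linarith [neg_abs_le a]
    · have := le_abs_self b
      have hmax : |b| ≤ max |a| |b| := le_max_right _ _
      linarith
  -- bounds on E
  have hEab : a ≤ E ∧ E ≤ b := by
    constructor
    · rw [hE]
      have : ∫ (_ : Ω), a ∂μ ≤ ∫ ω', f (x ⟨0, hn⟩ ω') (y ⟨0, hm⟩ ω') ∂μ :=
        integral_mono (integrable_const a) (hfint _ _) fun ω => (hfb _ _).1
      simpa using this
    · rw [hE]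
      have : ∫ ω', f (x ⟨0, hn⟩ ω') (y ⟨0, hm⟩ ω') ∂μ ≤ ∫ (_ : Ω), b ∂μ :=
        integral_mono (hfint _ _) (integrable_const b) fun ω => (hfb _ _).2
      simpa using this
  -- diagonals
  set σ : Fin n → Fin d → Fin n := fun u l => u + Fin.castLE hdn l with hσ
  set τ : Fin m → Fin d → Fin m := fun v l => v + Fin.castLE hdm l with hτ
  set Z : Fin n → Fin m → Fin d → Ω → ℝ := fun u v l ω => f (x (σ u l) ω) (y (τ v l) ω) - E
    with hZ
  set W : Fin n → Fin m → Ω → ℝ := fun u v => ∑ l, Z u v l with hW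
  have hZmeas : ∀ u v l, Measurable (Z u v l) := fun u v l => (hpm _ _).sub measurable_const
  have hZbound : ∀ u v l ω, a - E ≤ Z u v l ω ∧ Z u v l ω ≤ b - E := by
    intro u v l ω
    obtain ⟨h1, h2⟩ := hfb (x (σ u l) ω) (y (τ v l) ω)
    exact ⟨by simp only [hZ]; linarith, by simp only [hZ]; linarith⟩
  have hZcent : ∀ u v l, ∫ ω, Z u v l ω ∂μ = 0 := by
    intro u v l
    simp only [hZ]
    rw [integral_sub (hfint _ _) (integrable_const E), hint_eq, integral_const]
    simp
  have hZindep : ∀ u v,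
      iIndepFun (Z u v) μ := by
    intro u v
    have hinj : Function.Injective
        (Sum.elim (fun l => (Sum.inl (σ u l) : Fin n ⊕ Fin m))
          (fun l => (Sum.inr (τ v l) : Fin n ⊕ Fin m))) := by
      have hσinj : Function.Injective (σ u) := fun l l' hll => by
        simp only [hσ] at hll
        exact Fin.castLE_injective hdn (add_left_cancel hll)
      have hτinj : Function.Injective (τ v) := fun l l' hll => by
        simp only [hτ] at hll
        exact Fin.castLE_injective hdm (add_left_cancel hll)
      rintro (l | l) (l' | l') hll <;> simp_all
    have hpair := iIndepFun_pair (g := Sum.elim x y)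
      (fun k => by cases k with
        | inl i => exact hxm i
        | inr j => exact hym j) hindep _ _ hinj
    have := hpair.comp (fun _ : Fin d => fun p : S × S => f p.1 p.2 - E)
      (fun _ => hf.sub measurable_const)
    exact this
  -- choose s
  set s : ℝ := 4 * d * t / (b - a) ^ 2 with hs
  have hs0 : 0 < s := by positivity
  -- per-variable mgf bound
  have hZmgf : ∀ u v l, mgf (Z u v l) μ (s / d) ≤ Real.exp ((s / d) ^ 2 * (b - a) ^ 2 / 8) := by
    intro u v l
    have := mgf_le_of_mem_Icc (μ := μ) (hZmeas u v l) (a := a - E) (b := b - E)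
      (by linarith) (fun ω => ⟨(hZbound u v l ω).1, (hZbound u v l ω).2⟩)
      (hZcent u v l) (s / d)
    have heq : b - E - (a - E) = b - a := by ring
    rwa [heq] at this
  -- mgf of the diagonal sums
  have hWmgf : ∀ u v, mgf (W u v) μ (s / d) ≤ Real.exp (s ^ 2 * (b - a) ^ 2 / (8 * d)) := by
    intro u v
    rw [hW, (hZindep u v).mgf_sum (hZmeas u v) Finset.univ]
    calc ∏ l : Fin d, mgf (Z u v l) μ (s / d)
        ≤ ∏ _l : Fin d, Real.exp ((s / d) ^ 2 * (b - a) ^ 2 / 8) :=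
          Finset.prod_le_prod (fun l _ => mgf_nonneg) (fun l _ => hZmgf u v l)
      _ = Real.exp ((d : ℝ) * ((s / d) ^ 2 * (b - a) ^ 2 / 8)) := by
          rw [Finset.prod_const, Finset.card_univ, Fintype.card_fin, ← Real.exp_nat_mul]
      _ = Real.exp (s ^ 2 * (b - a) ^ 2 / (8 * d)) := by
          congr 1
          field_simp
  -- combinatorial identity
  have hsum : ∀ ω, (∑ u : Fin n, ∑ v : Fin m, ∑ l : Fin d,
        f (x (σ u l) ω) (y (τ v l) ω))
      = (d : ℝ) * ∑ i, ∑ j, f (x i ω) (y j ω) := by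
    intro ω
    have hswap : (∑ u : Fin n, ∑ v : Fin m, ∑ l : Fin d, f (x (σ u l) ω) (y (τ v l) ω))
        = ∑ l : Fin d, ∑ u : Fin n, ∑ v : Fin m, f (x (σ u l) ω) (y (τ v l) ω) := by
      rw [show (∑ u : Fin n, ∑ v : Fin m, ∑ l : Fin d, f (x (σ u l) ω) (y (τ v l) ω))
          = ∑ u : Fin n, ∑ l : Fin d, ∑ v : Fin m, f (x (σ u l) ω) (y (τ v l) ω) from
        Finset.sum_congr rfl fun u _ => Finset.sum_comm]
      exact Finset.sum_comm
    rw [hswap]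
    have hl : ∀ l : Fin d, (∑ u : Fin n, ∑ v : Fin m, f (x (σ u l) ω) (y (τ v l) ω))
        = ∑ i, ∑ j, f (x i ω) (y j ω) := by
      intro l
      have houter := Fintype.sum_equiv (Equiv.addRight (Fin.castLE hdn l))
        (fun u => ∑ v : Fin m, f (x (σ u l) ω) (y (τ v l) ω))
        (fun i => ∑ v : Fin m, f (x i ω) (y (τ v l) ω)) (fun u => rfl)
      rw [houter]
      refine Finset.sum_congr rfl fun i _ => ?_
      exact Fintype.sum_equiv (Equiv.addRight (Fin.castLE hdm l))
        (fun v => f (x i ω) (y (τ v l) ω)) (fun j => f (x i ω) (y j ω)) (fun v => rfl)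
    rw [Finset.sum_congr rfl fun l _ => hl l, Finset.sum_const, Finset.card_univ,
      Fintype.card_fin, nsmul_eq_mul]
  -- decomposition of s * X
  have hnR : (0:ℝ) < n := Nat.cast_pos.mpr hn
  have hmR : (0:ℝ) < m := Nat.cast_pos.mpr hm
  have hXdecomp : ∀ ω, s * X ω
      = ∑ uv : Fin n × Fin m, 1 / ((n : ℝ) * m) * (s / d * W uv.1 uv.2 ω) := by
    intro ω
    have hWval : ∀ (u : Fin n) (v : Fin m), W u v ω
        = (∑ l : Fin d, f (x (σ u l) ω) (y (τ v l) ω)) - d * E := by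
      intro u v
      simp only [hW, hZ, Finset.sum_apply, Finset.sum_sub_distrib, Finset.sum_const,
        Finset.card_univ, Fintype.card_fin, nsmul_eq_mul]
    have h1 : ∑ uv : Fin n × Fin m, 1 / ((n : ℝ) * m) * (s / d * W uv.1 uv.2 ω)
        = 1 / ((n : ℝ) * m) * (s / d) * ∑ uv : Fin n × Fin m, W uv.1 uv.2 ω := by
      rw [Finset.mul_sum]
      exact Finset.sum_congr rfl fun uv _ => by ring
    have h2 : ∑ uv : Fin n × Fin m, W uv.1 uv.2 ω
        = (d : ℝ) * (∑ i, ∑ j, f (x i ω) (y j ω)) - (n : ℝ) * m * (d * E) := by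
      rw [Fintype.sum_prod_type]
      simp only [hWval, Finset.sum_sub_distrib, Finset.sum_const, Finset.card_univ,
        Fintype.card_fin, nsmul_eq_mul]
      rw [hsum ω]
      ring
    rw [h1, h2, hXdef]
    field_simp
  -- Jensen step
  have hcard1 : ∑ _uv : Fin n × Fin m, 1 / ((n : ℝ) * m) = 1 := by
    rw [Finset.sum_const, Finset.card_univ, Fintype.card_prod, Fintype.card_fin,
      Fintype.card_fin, nsmul_eq_mul]
    push_cast
    field_simp
  have hJensen : ∀ ω, Real.exp (s * X ω)
      ≤ ∑ uv : Fin n × Fin m, 1 / ((n : ℝ) * m) * Real.exp (s / d * W uv.1 uv.2 ω) := by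
    intro ω
    rw [hXdecomp ω]
    have := convexOn_exp.map_sum_le (t := (Finset.univ : Finset (Fin n × Fin m)))
      (w := fun _ => 1 / ((n : ℝ) * m))
      (p := fun uv => s / d * W uv.1 uv.2 ω)
      (fun _ _ => by positivity) hcard1 (fun _ _ => Set.mem_univ _)
    simpa [smul_eq_mul] using this
  -- bounds on W and X for integrability
  have hWub : ∀ (u : Fin n) (v : Fin m) ω, s / d * W u v ω ≤ s / d * ((d : ℝ) * (b - E)) := by
    intro u v ω
    have h1 : W u v ω ≤ (d : ℝ) * (b - E) := by
      have h2 : ∑ l : Fin d, Z u v l ω ≤ ∑ _l : Fin d, (b - E) :=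
        Finset.sum_le_sum fun l _ => (hZbound u v l ω).2
      simp only [Finset.sum_const, Finset.card_univ, Fintype.card_fin, nsmul_eq_mul] at h2
      calc W u v ω = ∑ l : Fin d, Z u v l ω := by rw [hW]; simp [Finset.sum_apply]
        _ ≤ _ := h2
    exact mul_le_mul_of_nonneg_left h1 (by positivity)
  have hXub : ∀ ω, s * X ω ≤ s * (b - E) := by
    intro ω
    have h1 : X ω ≤ b - E := by
      rw [hXdef]
      simp only
      have hsb : (∑ i, ∑ j, f (x i ω) (y j ω)) ≤ ∑ _i : Fin n, ∑ _j : Fin m, b :=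
        Finset.sum_le_sum fun i _ => Finset.sum_le_sum fun j _ => (hfb _ _).2
      simp only [Finset.sum_const, Finset.card_univ, Fintype.card_fin, nsmul_eq_mul] at hsb
      have hnm : (0:ℝ) < (n : ℝ) * m := by positivity
      have : 1 / ((n : ℝ) * m) * (∑ i, ∑ j, f (x i ω) (y j ω))
          ≤ 1 / ((n : ℝ) * m) * ((n : ℝ) * ((m : ℝ) * b)) :=
        mul_le_mul_of_nonneg_left hsb (by positivity)
      have heq : 1 / ((n : ℝ) * m) * ((n : ℝ) * ((m : ℝ) * b)) = b := by
        field_simp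
      linarith
    exact mul_le_mul_of_nonneg_left h1 hs0.le
  have hXmeas : Measurable X := by
    apply Measurable.sub _ measurable_const
    exact (Finset.measurable_sum _ fun i _ =>
      Finset.measurable_sum _ fun j _ => hpm i j).const_mul _
  have hWmeas : ∀ (u : Fin n) (v : Fin m), Measurable (W u v) := by
    intro u v
    have heqW : W u v = fun ω => ∑ l : Fin d, Z u v l ω := by
      rw [hW]; ext ω; simp [Finset.sum_apply]
    rw [heqW]
    exact Finset.measurable_sum _ fun l _ => hZmeas u v l
  have hintX : Integrable (fun ω => Real.exp (s * X ω)) μ :=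
    integrable_exp_of_bounded (hXmeas.const_mul s) hXub
  have hintW : ∀ uv : Fin n × Fin m,
      Integrable (fun ω => Real.exp (s / d * W uv.1 uv.2 ω)) μ := fun uv =>
    integrable_exp_of_bounded ((hWmeas uv.1 uv.2).const_mul (s / d)) (hWub uv.1 uv.2)
  -- mgf bound for X
  have hmgfX : mgf X μ s ≤ Real.exp (s ^ 2 * (b - a) ^ 2 / (8 * d)) := by
    have hstep : mgf X μ s
        ≤ ∑ uv : Fin n × Fin m, 1 / ((n : ℝ) * m) * mgf (W uv.1 uv.2) μ (s / d) := by
      have h1 : mgf X μ s ≤ ∫ ω, (∑ uv : Fin n × Fin m,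
          1 / ((n : ℝ) * m) * Real.exp (s / d * W uv.1 uv.2 ω)) ∂μ :=
        integral_mono hintX
          (integrable_finset_sum _ fun uv _ => (hintW uv).const_mul _) hJensen
      rw [integral_finset_sum _ fun uv _ => (hintW uv).const_mul _] at h1
      refine h1.trans_eq (Finset.sum_congr rfl fun uv _ => ?_)
      rw [integral_const_mul]
      rfl
    refine hstep.trans ?_
    calc ∑ uv : Fin n × Fin m, 1 / ((n : ℝ) * m) * mgf (W uv.1 uv.2) μ (s / d)
        ≤ ∑ _uv : Fin n × Fin m, 1 / ((n : ℝ) * m) * Real.exp (s ^ 2 * (b - a) ^ 2 / (8 * d)) :=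
          Finset.sum_le_sum fun uv _ =>
            mul_le_mul_of_nonneg_left (hWmgf uv.1 uv.2) (by positivity)
      _ = Real.exp (s ^ 2 * (b - a) ^ 2 / (8 * d)) := by
          rw [← Finset.sum_mul, hcard1, one_mul]
  -- Chernoff
  have hCher := measure_ge_le_exp_mul_mgf (μ := μ) (X := X) t hs0.le hintX
  refine hCher.trans ?_
  calc Real.exp (-s * t) * mgf X μ s
      ≤ Real.exp (-s * t) * Real.exp (s ^ 2 * (b - a) ^ 2 / (8 * d)) :=
        mul_le_mul_of_nonneg_left hmgfX (Real.exp_pos _).le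
    _ = Real.exp (-s * t + s ^ 2 * (b - a) ^ 2 / (8 * d)) := (Real.exp_add _ _).symm
    _ ≤ Real.exp (-2 * n * m * t ^ 2 / (((n : ℝ) + m - 1) * (b - a) ^ 2)) := by
        apply Real.exp_le_exp.mpr
        have hexp : -s * t + s ^ 2 * (b - a) ^ 2 / (8 * d) = -2 * d * t ^ 2 / (b - a) ^ 2 := by
          rw [hs]
          field_simp
          ring
        rw [hexp]
        have hnat : n * m + d ≤ d * (n + m) := by
          rcases le_total n m with h | h
          · rw [hdd, min_eq_left h, Nat.mul_add]
            have h1 : n ≤ n * n := Nat.le_mul_of_pos_left n hn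
            linarith
          · rw [hdd, min_eq_right h, Nat.mul_add]
            have h1 : m ≤ m * m := Nat.le_mul_of_pos_left m hm
            have h2 : n * m = m * n := Nat.mul_comm n m
            linarith
        have hcast : (n : ℝ) * m ≤ (d : ℝ) * ((n : ℝ) + m - 1) := by
          have hc := (Nat.cast_le (α := ℝ)).mpr hnat
          push_cast at hc
          have hring : (d : ℝ) * ((n : ℝ) + m - 1) = (d : ℝ) * ((n : ℝ) + m) - d := by ring
          rw [hring]
          linarith
        have hden1 : (0:ℝ) < (b - a) ^ 2 := by positivity
        have hden2 : (0:ℝ) < ((n : ℝ) + m - 1) * (b - a) ^ 2 := by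
          apply mul_pos _ hden1
          have h1 : (1:ℝ) ≤ (n : ℝ) := by exact_mod_cast hn
          have h2 : (1:ℝ) ≤ (m : ℝ) := by exact_mod_cast hm
          linarith
        rw [div_le_div_iff₀ hden1 hden2]
        have ht2 : (0:ℝ) < t ^ 2 := by positivity
        nlinarith [mul_pos ht2 hden1]
end

section
/- Set E := A − B and let ε ∈ (0,1). If |⟨E f, f⟩| ≤ ε ⟨(I − A) f, f⟩ for all f ∈ H, then for every index i ≥ 2 (so that λ_i < 1) one has | (1 − μ_i)/(1 − λ_i) − 1 | ≤ ε; equivalently, (1 − ε)(1 − λ_i) ≤ 1 − μ_i ≤ (1 + ε)(1 − λ_i). -/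
open scoped RealInnerProductSpace

lemma qform_aux {H : Type*} [NormedAddCommGroup H] [InnerProductSpace ℝ H] [CompleteSpace H]
    (T : H →L[ℝ] H) (v : ℕ → H) (c : ℕ → ℝ)
    (hv : Orthonormal ℝ v)
    (hTotal : ⊤ ≤ (Submodule.span ℝ (Set.range v)).topologicalClosure)
    (hTv : ∀ j, T (v j) = c j • v j) (f : H) :
    HasSum (fun j => c j * ⟪v j, f⟫ ^ 2) ⟪T f, f⟫ := by
  set b : HilbertBasis ℕ ℝ H := HilbertBasis.mk hv hTotal with hb
  have hcoe : ∀ j, b j = v j := fun j => by rw [hb, HilbertBasis.coe_mk]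
  have h1 : HasSum (fun j => b.repr f j • b j) f := b.hasSum_repr f
  have h2 : HasSum (fun j => T (b.repr f j • b j)) (T f) := h1.mapL T
  have h3 : HasSum (fun j => ⟪f, T (b.repr f j • b j)⟫) ⟪f, T f⟫ := h2.mapL (innerSL ℝ f)
  have key : ∀ j, ⟪f, T (b.repr f j • b j)⟫ = c j * ⟪v j, f⟫ ^ 2 := by
    intro j
    rw [map_smul, hcoe, hTv, b.repr_apply_apply, hcoe, real_inner_smul_right,
      real_inner_smul_right, real_inner_comm f (v j)]
    ring
  rw [real_inner_comm]
  simpa only [key] using h3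

lemma exists_test_vec {H : Type*} [NormedAddCommGroup H] [InnerProductSpace ℝ H]
    (u w : ℕ → H) (hw : Orthonormal ℝ w) (i : ℕ) :
    ∃ f : H, f ≠ 0 ∧ (∀ j < i, ⟪u j, f⟫ = 0) ∧ (∀ j, i < j → ⟪w j, f⟫ = 0) := by
  classical
  set g : Fin (i + 1) → H := fun k => w k with hg
  have hgon : Orthonormal ℝ g := hw.comp _ Fin.val_injective
  set V : Submodule ℝ H := Submodule.span ℝ (Set.range g) with hV
  haveI : FiniteDimensional ℝ V := FiniteDimensional.span_of_finite ℝ (Set.finite_range g)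
  have hdim : Module.finrank ℝ V = i + 1 := by
    rw [hV, finrank_span_eq_card hgon.linearIndependent]
    simp
  let φ : V →ₗ[ℝ] (Fin i → ℝ) :=
    { toFun := fun f => fun j => ⟪u j, (f : H)⟫
      map_add' := by intro x y; funext j; simp [inner_add_right]
      map_smul' := by intro r x; funext j; simp [real_inner_smul_right] }
  have hninj : ¬ Function.Injective φ := by
    intro h
    have h2 := LinearMap.finrank_le_finrank_of_injective h
    rw [hdim] at h2
    simp [Module.finrank_pi] at h2
  rw [Function.not_injective_iff] at hninj
  obtain ⟨x, y, hxy, hne⟩ := hninj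
  refine ⟨(x : H) - (y : H), ?_, ?_, ?_⟩
  · intro h
    exact hne (Subtype.coe_injective (by linear_combination (norm := module) h))
  · intro j hj
    have := congrFun hxy ⟨j, hj⟩
    simp only [φ, LinearMap.coe_mk, AddHom.coe_mk] at this
    rw [inner_sub_right, this, sub_self]
  · intro j hj
    have hz : (x : H) - (y : H) ∈ V := sub_mem x.2 y.2
    have : ∀ z ∈ V, ⟪w j, z⟫ = 0 := by
      intro z hz
      induction hz using Submodule.span_induction with
      | mem z hzm =>
        obtain ⟨k, rfl⟩ := hzm
        exact hw.2 (by omega : j ≠ (k : ℕ))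
      | zero => simp
      | add a b _ _ ha hb => rw [inner_add_right, ha, hb, add_zero]
      | smul r a _ ha => rw [real_inner_smul_right, ha, mul_zero]
    exact this _ hz

lemma eig_compare {H : Type*} [NormedAddCommGroup H] [InnerProductSpace ℝ H] [CompleteSpace H]
    (S T : H →L[ℝ] H) (u w : ℕ → H) (a b : ℕ → ℝ)
    (hu : Orthonormal ℝ u) (hw : Orthonormal ℝ w)
    (huTotal : ⊤ ≤ (Submodule.span ℝ (Set.range u)).topologicalClosure)
    (hwTotal : ⊤ ≤ (Submodule.span ℝ (Set.range w)).topologicalClosure)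
    (hSu : ∀ j, S (u j) = a j • u j) (hTw : ∀ j, T (w j) = b j • w j)
    (ha : Antitone a) (hb : Antitone b)
    (hle : ∀ f : H, ⟪T f, f⟫ ≤ ⟪S f, f⟫) (i : ℕ) : b i ≤ a i := by
  obtain ⟨f, hf0, hfu, hfw⟩ := exists_test_vec u w hw i
  have hSf := qform_aux S u a hu huTotal hSu f
  have hTf := qform_aux T w b hw hwTotal hTw f
  have hIdu : HasSum (fun j => ⟪u j, f⟫ ^ 2) ⟪f, f⟫ := by
    simpa using qform_aux (ContinuousLinearMap.id ℝ H) u (fun _ => 1) hu huTotal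
      (by simp) f
  have hIdw : HasSum (fun j => ⟪w j, f⟫ ^ 2) ⟪f, f⟫ := by
    simpa using qform_aux (ContinuousLinearMap.id ℝ H) w (fun _ => 1) hw hwTotal
      (by simp) f
  have hpos : 0 < ⟪f, f⟫ := by
    rw [real_inner_self_eq_norm_sq]
    exact pow_pos (norm_pos_iff.mpr hf0) 2
  have hup : ⟪S f, f⟫ ≤ a i * ⟪f, f⟫ := by
    refine hasSum_le (fun j => ?_) hSf (hIdu.mul_left (a i))
    rcases lt_or_ge j i with h | h
    · rw [hfu j h]; simp
    · exact mul_le_mul_of_nonneg_right (ha h) (sq_nonneg _)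
  have hlo : b i * ⟪f, f⟫ ≤ ⟪T f, f⟫ := by
    refine hasSum_le (fun j => ?_) (hIdw.mul_left (b i)) hTf
    rcases le_or_gt j i with h | h
    · exact mul_le_mul_of_nonneg_right (hb h) (sq_nonneg _)
    · rw [hfw j h]; simp
  have h1 := hle f
  have h2 : b i * ⟪f, f⟫ ≤ a i * ⟪f, f⟫ := by linarith
  exact le_of_mul_le_mul_right h2 hpos

/-- Comparison of spectral gaps of two compact self-adjoint operators: if
`|⟨(A−B)f, f⟩| ≤ ε ⟨(I−A)f, f⟩` for all `f`, then for every `i ≥ 1` (so that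
`λ_i < 1`), `|(1−μ_i)/(1−λ_i) − 1| ≤ ε`. -/
theorem eigenvalue_ratio_comparison
    {H : Type*} [NormedAddCommGroup H] [InnerProductSpace ℝ H] [CompleteSpace H]
    [TopologicalSpace.SeparableSpace H]
    (A B : H →L[ℝ] H)
    (hA : IsSelfAdjoint A) (hB : IsSelfAdjoint B)
    (hAc : IsCompactOperator A) (hBc : IsCompactOperator B)
    (u w : ℕ → H) (lam mu : ℕ → ℝ)
    (hu : Orthonormal ℝ u) (hw : Orthonormal ℝ w)
    (huTotal : ⊤ ≤ (Submodule.span ℝ (Set.range u)).topologicalClosure)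
    (hwTotal : ⊤ ≤ (Submodule.span ℝ (Set.range w)).topologicalClosure)
    (hAu : ∀ j, A (u j) = lam j • u j)
    (hBw : ∀ j, B (w j) = mu j • w j)
    (hlam0 : lam 0 = 1) (hlamAnti : StrictAnti lam) (hlamNonneg : ∀ j, 0 ≤ lam j)
    (hmuAnti : StrictAnti mu)
    (ε : ℝ) (hε : 0 < ε) (hε1 : ε < 1)
    (hE : ∀ f : H, |⟪(A - B) f, f⟫| ≤ ε * ⟪(ContinuousLinearMap.id ℝ H - A) f, f⟫) :
    ∀ i : ℕ, 1 ≤ i → |(1 - mu i) / (1 - lam i) - 1| ≤ ε := by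
  have hEexp : ∀ f : H, |⟪A f, f⟫ - ⟪B f, f⟫| ≤ ε * (⟪f, f⟫ - ⟪A f, f⟫) := by
    intro f
    have := hE f
    simpa [ContinuousLinearMap.sub_apply, inner_sub_left] using this
  -- Upper comparison operator S1 = (1-ε)A + εI
  set S1 : H →L[ℝ] H := (1 - ε) • A + ε • ContinuousLinearMap.id ℝ H with hS1
  have hS1u : ∀ j, S1 (u j) = ((1 - ε) * lam j + ε) • u j := by
    intro j
    simp only [hS1, ContinuousLinearMap.add_apply, ContinuousLinearMap.smul_apply,
      ContinuousLinearMap.id_apply, hAu j, smul_smul, add_smul]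
  have hS1q : ∀ f : H, ⟪B f, f⟫ ≤ ⟪S1 f, f⟫ := by
    intro f
    have h := (abs_le.mp (hEexp f)).1
    simp only [hS1, ContinuousLinearMap.add_apply, ContinuousLinearMap.smul_apply,
      ContinuousLinearMap.id_apply, inner_add_left, real_inner_smul_left]
    nlinarith
  -- Lower comparison operator S2 = (1+ε)A - εI
  set S2 : H →L[ℝ] H := (1 + ε) • A - ε • ContinuousLinearMap.id ℝ H with hS2
  have hS2u : ∀ j, S2 (u j) = ((1 + ε) * lam j - ε) • u j := by
    intro j
    simp only [hS2, ContinuousLinearMap.sub_apply, ContinuousLinearMap.smul_apply,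
      ContinuousLinearMap.id_apply, hAu j, smul_smul, sub_smul]
  have hS2q : ∀ f : H, ⟪S2 f, f⟫ ≤ ⟪B f, f⟫ := by
    intro f
    have h := (abs_le.mp (hEexp f)).2
    simp only [hS2, ContinuousLinearMap.sub_apply, ContinuousLinearMap.smul_apply,
      ContinuousLinearMap.id_apply, inner_sub_left, real_inner_smul_left]
    nlinarith
  have ha1 : Antitone (fun j => (1 - ε) * lam j + ε) := by
    intro j k hjk
    have := hlamAnti.antitone hjk
    dsimp only
    nlinarith
  have ha2 : Antitone (fun j => (1 + ε) * lam j - ε) := by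
    intro j k hjk
    have := hlamAnti.antitone hjk
    dsimp only
    nlinarith
  intro i hi
  have hup : mu i ≤ (1 - ε) * lam i + ε :=
    eig_compare S1 B u w (fun j => (1 - ε) * lam j + ε) mu hu hw huTotal hwTotal
      hS1u hBw ha1 hmuAnti.antitone hS1q i
  have hlo : (1 + ε) * lam i - ε ≤ mu i :=
    eig_compare B S2 w u mu (fun j => (1 + ε) * lam j - ε) hw hu hwTotal huTotal
      hBw hS2u hmuAnti.antitone ha2 hS2q i
  have hlt : lam i < 1 := by
    have := hlamAnti (show 0 < i by omega)
    rw [hlam0] at this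
    exact this
  have hd : 0 < 1 - lam i := by linarith
  rw [show (1 - mu i) / (1 - lam i) - 1 = ((1 - mu i) - (1 - lam i)) / (1 - lam i) by
    field_simp, abs_div, abs_of_pos hd, div_le_iff₀ hd, abs_le]
  constructor <;> nlinarith
end
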